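/- arXiv:1307.6876 — 2 statements merged into one kernel-verified Lean document; each statement's English description precedes it below -/
import Mathlib

section
/- Fix 1 ≤ α < ∞. Every λ ∈ E which is not an eigenvalue of the transition operator S acting on l^α belongs to the approximate point spectrum of S on l^α: there exists a sequence of vectors u_k ∈ l^α with ‖u_k‖_α = 1 such that ‖S u_k − λ u_k‖_α → 0 as k → ∞. -/
open Filter Finset
open scoped ENNReal Topology ZeroAtInfty

set_option linter.unusedSectionVars false
set_option linter.unusedVariables false
set_option linter.unnecessarySimpa false
set_option linter.unusedTactic false
noncomputable section

namespace AMFC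

/-- `q d j = d 0 * d 1 * ... * d j`. -/
def q (d : ℕ → ℕ) (j : ℕ) : ℕ := ∏ i ∈ Finset.range (j + 1), d i

/-- For `j ≥ 1`, `digit d n j = ⌊n / q_{j-1}⌋ mod d_j` is the `j`-th digit of `n`
in the Cantor system of numeration. -/
def digit (d : ℕ → ℕ) (n j : ℕ) : ℕ := (n / q d (j - 1)) % d j

/-- The counter `ζ_n = min { j ≥ 1 : a_j(n) ≠ d_j - 1 }`. -/
def zeta (d : ℕ → ℕ) (n : ℕ) : ℕ := sInf {j | 1 ≤ j ∧ digit d n j ≠ d j - 1}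

open scoped Classical in
/-- The transition probabilities of the stochastic adding machine. -/
def s (d : ℕ → ℕ) (p : ℕ → ℝ) (n m : ℕ) : ℝ :=
  if m = n + 1 then ∏ j ∈ Finset.Icc 1 (zeta d n), p j
  else if m = n then 1 - p 1
  else if h : ∃ r, 1 ≤ r ∧ r + 1 ≤ zeta d n ∧
      n = m + ∑ j ∈ Finset.Icc 1 r, (d j - 1) * q d (j - 1)
    then (1 - p (h.choose + 1)) * ∏ j ∈ Finset.Icc 1 h.choose, p j
  else 0

/-- `f j (z) = ((z - (1 - p j)) / p j) ^ (d j)`. -/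
def f (d : ℕ → ℕ) (p : ℕ → ℝ) (j : ℕ) (z : ℂ) : ℂ :=
  ((z - (1 - (p j : ℂ))) / (p j : ℂ)) ^ d j

/-- `ftil j = f j ∘ ... ∘ f 1`, with `ftil 0 = id`. -/
def ftil (d : ℕ → ℕ) (p : ℕ → ℝ) : ℕ → ℂ → ℂ
  | 0 => id
  | j + 1 => f d p (j + 1) ∘ ftil d p j

/-- The fibered filled Julia set `E = {z : limsup_j |ftil j z| < ∞}`. -/
def E (d : ℕ → ℕ) (p : ℕ → ℝ) : Set ℂ :=
  {z | Filter.limsup (fun j => (‖ftil d p j z‖₊ : ℝ≥0∞)) Filter.atTop < ⊤}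

/-- `ι_λ(r) = (ftil (r-1) λ - (1 - p r)) / p r` for `r ≥ 1`. -/
def iota (d : ℕ → ℕ) (p : ℕ → ℝ) (lam : ℂ) (r : ℕ) : ℂ :=
  (ftil d p (r - 1) lam - (1 - (p r : ℂ))) / (p r : ℂ)

/-- `v_λ(n) = ∏_{r ≥ 1} ι_λ(r) ^ a_r(n)`, a finite product. -/
def vlam (d : ℕ → ℕ) (p : ℕ → ℝ) (lam : ℂ) (n : ℕ) : ℂ :=
  ∏ᶠ r : ℕ, iota d p lam (r + 1) ^ digit d n (r + 1)

section prelim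
variable {d : ℕ → ℕ} (hd0 : d 0 = 1) (hd : ∀ j, 1 ≤ j → 2 ≤ d j)

lemma q_zero (hd0 : d 0 = 1) : q d 0 = 1 := by simp [q, hd0]

lemma q_succ (d : ℕ → ℕ) (j : ℕ) : q d (j + 1) = q d j * d (j + 1) := by
  simp [q, Finset.prod_range_succ]

include hd0 hd

lemma q_pos : ∀ j, 0 < q d j := by
  intro j
  induction j with
  | zero => simp [q_zero hd0]
  | succ k ih => rw [q_succ]; exact Nat.mul_pos ih (lt_of_lt_of_le one_pos (le_trans one_le_two (hd _ (Nat.succ_le_succ (Nat.zero_le k)))))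

lemma q_strictMono : StrictMono (q d) := by
  apply strictMono_nat_of_lt_succ
  intro j
  rw [q_succ]
  have h2 := hd (j+1) (Nat.succ_le_succ (Nat.zero_le j))
  calc q d j = q d j * 1 := (mul_one _).symm
  _ < q d j * d (j+1) := (Nat.mul_lt_mul_left (q_pos hd0 hd j)).mpr (by omega)

lemma lt_q_self : ∀ j, j < q d j := by
  intro j
  induction j with
  | zero => simp [q_zero hd0]
  | succ k ih =>
    have := q_strictMono hd0 hd (show k < k+1 by omega)
    omega

lemma q_dvd_q {i j : ℕ} (h : i ≤ j) : q d i ∣ q d j := by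
  apply Finset.prod_dvd_prod_of_subset
  intro x hx
  simp only [Finset.mem_range] at *
  omega

lemma q_pred_mul (j : ℕ) (hj : 1 ≤ j) : q d (j - 1) * d j = q d j := by
  obtain ⟨k, rfl⟩ := Nat.exists_eq_add_of_le hj
  simp [q_succ, Nat.add_comm 1 k]

-- helper nat lemmas
lemma nat_mul_sub_one_div {a b : ℕ} (ha : 1 ≤ a) (hb : 1 ≤ b) : (b * a - 1) / a = b - 1 := by
  obtain ⟨m, rfl⟩ := Nat.exists_eq_add_of_le hb
  have h1 : (1 + m) * a - 1 = m * a + (a - 1) := by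
    have : (1 + m) * a = a + m * a := by ring
    omega
  rw [h1, Nat.add_comm, Nat.add_mul_div_right _ _ (by omega), Nat.div_eq_of_lt (by omega)]
  omega

lemma nat_mul_sub_one_mod {a b : ℕ} (ha : 1 ≤ a) (hb : 1 ≤ b) : (b * a - 1) % a = a - 1 := by
  obtain ⟨m, rfl⟩ := Nat.exists_eq_add_of_le hb
  have h1 : (1 + m) * a - 1 = m * a + (a - 1) := by
    have : (1 + m) * a = a + m * a := by ring
    omega
  rw [h1, Nat.add_comm, Nat.add_mul_mod_self_right, Nat.mod_eq_of_lt (by omega)]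

-- digit basics
lemma digit_lt (n j : ℕ) (hj : 1 ≤ j) : digit d n j < d j :=
  Nat.mod_lt _ (by have := hd j hj; omega)

lemma digit_eq_zero_of_lt {n j : ℕ} (h : n < q d (j - 1)) : digit d n j = 0 := by
  simp [digit, Nat.div_eq_of_lt h]

lemma digit_eq_mod_div {n j : ℕ} (hj : 1 ≤ j) :
    digit d n j = (n % q d j) / q d (j - 1) := by
  rw [digit, ← q_pred_mul hd0 hd j hj, Nat.mod_mul_right_div_self]


lemma mod_q_succ (n r : ℕ) :
    n % q d (r + 1) = q d r * ((n / q d r) % d (r + 1)) + n % q d r := by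
  have h1 : n % (q d r * d (r+1)) / q d r = (n / q d r) % d (r+1) :=
    Nat.mod_mul_right_div_self n (q d r) (d (r+1))
  have h2 : n % (q d r * d (r+1)) % q d r = n % q d r :=
    Nat.mod_mod_of_dvd n ⟨d (r+1), rfl⟩
  have h3 := Nat.div_add_mod (n % (q d r * d (r+1))) (q d r)
  rw [q_succ, ← h1, ← h2]
  omega

lemma digit_succ_eq (n r : ℕ) : digit d n (r + 1) = (n / q d r) % d (r + 1) := rfl

lemma mod_q_of_maxdigits {n r : ℕ} (h : ∀ j, 1 ≤ j → j ≤ r → digit d n j = d j - 1) :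
    n % q d r = q d r - 1 := by
  induction r with
  | zero => simp [q_zero hd0, Nat.mod_one]
  | succ m ih =>
    have hm : n % q d m = q d m - 1 := ih (fun j h1 h2 => h j h1 (by omega))
    have hdig : (n / q d m) % d (m+1) = d (m+1) - 1 := h (m+1) (by omega) le_rfl
    have hq := mod_q_succ hd0 hd n m
    rw [hm, hdig] at hq
    have hQ := q_pos hd0 hd m
    have hD := hd (m+1) (by omega)
    have hqs : q d (m+1) = q d m * d (m+1) := q_succ d m
    have hmul : q d m * (d (m+1) - 1) = q d m * d (m+1) - q d m := by
      rw [Nat.mul_sub, Nat.mul_one]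
    have hle : q d m ≤ q d m * d (m+1) := Nat.le_mul_of_pos_right _ (by omega)
    omega

lemma maxdigits_of_mod {n r : ℕ} (h : n % q d r = q d r - 1) :
    ∀ j, 1 ≤ j → j ≤ r → digit d n j = d j - 1 := by
  intro j h1 h2
  have hqj := q_pos hd0 hd j
  have hqj1 := q_pos hd0 hd (j - 1)
  have hdj := hd j h1
  have hdvd : q d j ∣ q d r := q_dvd_q hd0 hd h2
  obtain ⟨c, hc⟩ := hdvd
  have hc1 : 1 ≤ c := by
    rcases Nat.eq_zero_or_pos c with h0 | h0
    · have := q_pos hd0 hd r; rw [hc, h0, Nat.mul_zero] at this; omega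
    · exact h0
  have hmodj : n % q d j = q d j - 1 := by
    have : n % q d r % q d j = n % q d j := Nat.mod_mod_of_dvd n ⟨c, hc⟩
    rw [← this, h, hc]
    have : q d j * c - 1 = c * q d j - 1 := by ring_nf
    rw [this, nat_mul_sub_one_mod hd0 hd hqj hc1]
  rw [digit_eq_mod_div hd0 hd h1, hmodj, ← q_pred_mul hd0 hd j h1]
  have : q d (j-1) * d j - 1 = d j * q d (j-1) - 1 := by ring_nf
  rw [this, nat_mul_sub_one_div hd0 hd hqj1 (by omega)]

lemma digit_eq_zero_of_dvd {m i j : ℕ} (h1 : 1 ≤ i) (h2 : i ≤ j) (h : q d j ∣ m) :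
    digit d m i = 0 := by
  obtain ⟨t, rfl⟩ := h
  have hqi1 := q_pos hd0 hd (i - 1)
  obtain ⟨c, hc⟩ : q d (i-1) ∣ q d j := q_dvd_q hd0 hd (by omega)
  have hdc : d i ∣ c := by
    have h3 : q d (i-1) * d i ∣ q d (i-1) * c := by
      rw [← hc, q_pred_mul hd0 hd i h1]; exact q_dvd_q hd0 hd h2
    exact (mul_dvd_mul_iff_left (by omega : q d (i-1) ≠ 0)).mp h3
  rw [digit, hc, Nat.mul_assoc, Nat.mul_comm (q d (i-1)) (c * t),
    Nat.mul_div_cancel _ hqi1]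
  obtain ⟨e, rfl⟩ := hdc
  simp [Nat.mul_assoc, Nat.mul_mod_right]

-- zeta lemmas
lemma zeta_mem (n : ℕ) : zeta d n ∈ {j | 1 ≤ j ∧ digit d n j ≠ d j - 1} := by
  apply Nat.sInf_mem
  refine ⟨n + 1, by omega, ?_⟩
  have h1 : n < q d ((n+1) - 1) := by simpa using lt_q_self hd0 hd n
  rw [digit_eq_zero_of_lt hd0 hd h1]
  have := hd (n+1) (by omega)
  omega

lemma zeta_pos (n : ℕ) : 1 ≤ zeta d n := (zeta_mem hd0 hd n).1

lemma zeta_digit_ne (n : ℕ) : digit d n (zeta d n) ≠ d (zeta d n) - 1 :=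
  (zeta_mem hd0 hd n).2

lemma digit_of_lt_zeta {n j : ℕ} (h1 : 1 ≤ j) (h2 : j < zeta d n) :
    digit d n j = d j - 1 := by
  by_contra hne
  have hle : zeta d n ≤ j :=
    Nat.sInf_le (show j ∈ {i | 1 ≤ i ∧ digit d n i ≠ d i - 1} from ⟨h1, hne⟩)
  omega

lemma zeta_le {n j : ℕ} (h1 : 1 ≤ j) (h2 : digit d n j ≠ d j - 1) : zeta d n ≤ j :=
  Nat.sInf_le (show j ∈ {i | 1 ≤ i ∧ digit d n i ≠ d i - 1} from ⟨h1, h2⟩)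

lemma mod_q_zeta (n : ℕ) {r : ℕ} (hr : r ≤ zeta d n - 1) : n % q d r = q d r - 1 :=
  mod_q_of_maxdigits hd0 hd (fun j hj1 hj2 =>
    digit_of_lt_zeta hd0 hd hj1 (by have := zeta_pos hd0 hd n; omega))

-- helper: (x+1) % m = x % m + 1 when room
lemma add_one_mod {x m : ℕ} (h : x % m + 1 < m) : (x + 1) % m = x % m + 1 := by
  conv_lhs => rw [← Nat.div_add_mod x m]
  rw [Nat.add_assoc, Nat.add_comm (m * (x / m)) (x % m + 1), Nat.add_mul_mod_self_left,
    Nat.mod_eq_of_lt h]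

lemma add_one_div {x b : ℕ} (h : x % b + 1 < b) : (x + 1) / b = x / b := by
  rw [Nat.succ_div, if_neg, Nat.add_zero]
  intro hdvd
  have h0 : (x+1) % b = 0 := Nat.mod_eq_zero_of_dvd hdvd
  have h1 : (x+1) % b = x % b + 1 := add_one_mod hd0 hd h
  omega

-- S1: digits of n+1
lemma digit_add_one_lt {n j : ℕ} (h1 : 1 ≤ j) (h2 : j < zeta d n) :
    digit d (n + 1) j = 0 := by
  have hmod : n % q d (zeta d n - 1) = q d (zeta d n - 1) - 1 :=
    mod_q_zeta hd0 hd n le_rfl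
  have hpos := q_pos hd0 hd (zeta d n - 1)
  have hdvd : q d (zeta d n - 1) ∣ n + 1 := by
    have h1 := Nat.div_add_mod n (q d (zeta d n - 1))
    have h2 : q d (zeta d n - 1) * (n / q d (zeta d n - 1) + 1)
        = q d (zeta d n - 1) * (n / q d (zeta d n - 1)) + q d (zeta d n - 1) := by ring
    exact ⟨n / q d (zeta d n - 1) + 1, by omega⟩
  exact digit_eq_zero_of_dvd hd0 hd h1 (by omega) hdvd

lemma digit_add_one_zeta (n : ℕ) :
    digit d (n + 1) (zeta d n) = digit d n (zeta d n) + 1 := by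
  set z := zeta d n with hz
  have hz1 : 1 ≤ z := zeta_pos hd0 hd n
  set a := q d (z - 1) with ha
  have hpos : 0 < a := q_pos hd0 hd (z-1)
  have hmod : n % a = a - 1 := mod_q_zeta hd0 hd n le_rfl
  have hdiv : (n + 1) / a = n / a + 1 := by
    have h1 := Nat.div_add_mod n a
    have h2 : n + 1 = a * (n / a + 1) := by
      have : a * (n/a + 1) = a * (n/a) + a := by ring
      omega
    rw [h2, Nat.mul_div_cancel_left _ hpos]
  have hlt : digit d n z < d z := digit_lt hd0 hd n z hz1
  have hne := zeta_digit_ne hd0 hd n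
  rw [← hz] at hne
  have hd2 := hd z hz1
  have hroom : (n / a) % d z + 1 < d z := by
    have : digit d n z = (n / a) % d z := rfl
    omega
  show (n+1) / a % d z = n / a % d z + 1
  rw [hdiv, add_one_mod hd0 hd hroom]

lemma digit_add_one_gt {n j : ℕ} (h2 : zeta d n < j) :
    digit d (n + 1) j = digit d n j := by
  have hz1 := zeta_pos hd0 hd n
  have hpos := q_pos hd0 hd (j - 1)
  have hroom : n % q d (j-1) + 1 < q d (j-1) := by
    have hlt : n % q d (j-1) < q d (j-1) := Nat.mod_lt _ hpos
    rcases Nat.lt_or_ge (n % q d (j-1) + 1) (q d (j-1)) with h | h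
    · exact h
    · exfalso
      have hmax : n % q d (j-1) = q d (j-1) - 1 := by omega
      have := maxdigits_of_mod hd0 hd hmax (zeta d n) hz1 (by omega)
      exact zeta_digit_ne hd0 hd n this
  show (n+1) / q d (j-1) % d j = n / q d (j-1) % d j
  rw [add_one_div hd0 hd hroom]

-- S2 : digits of n - (q r - 1)
lemma sub_digits {n r : ℕ} (hr1 : 1 ≤ r) (hr2 : r < zeta d n) :
    (∀ i, 1 ≤ i → i ≤ r → digit d (n - (q d r - 1)) i = 0) ∧
    (∀ j, r < j → digit d (n - (q d r - 1)) j = digit d n j) := by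
  have hpos := q_pos hd0 hd r
  have hmod : n % q d r = q d r - 1 := mod_q_zeta hd0 hd n (by omega)
  have hda := Nat.div_add_mod n (q d r)
  have hm : n - (q d r - 1) = q d r * (n / q d r) := by omega
  constructor
  · intro i hi1 hi2
    exact digit_eq_zero_of_dvd hd0 hd hi1 hi2 ⟨n / q d r, hm⟩
  · intro j hj
    have hj1 : 1 ≤ j := by omega
    obtain ⟨c, hc⟩ : q d r ∣ q d (j-1) := q_dvd_q hd0 hd (by omega)
    show (n - (q d r - 1)) / q d (j-1) % d j = n / q d (j-1) % d j
    rw [hm, hc, ← Nat.div_div_eq_div_mul, ← Nat.div_div_eq_div_mul,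
      Nat.mul_div_cancel_left _ hpos]

-- digits of q d k - 1 and q d k
lemma mod_q_sub_one {k r : ℕ} (hrk : r ≤ k) : (q d k - 1) % q d r = q d r - 1 := by
  obtain ⟨c, hc⟩ := q_dvd_q hd0 hd hrk
  have hr := q_pos hd0 hd r
  have hk := q_pos hd0 hd k
  have hc1 : 1 ≤ c := by
    rcases Nat.eq_zero_or_pos c with h0 | h0
    · rw [hc, h0, Nat.mul_zero] at hk; omega
    · exact h0
  rw [hc]
  have : q d r * c - 1 = c * q d r - 1 := by ring_nf
  rw [this, nat_mul_sub_one_mod hd0 hd hr hc1]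

lemma digit_q_sub_one_le {k j : ℕ} (h1 : 1 ≤ j) (h2 : j ≤ k) :
    digit d (q d k - 1) j = d j - 1 :=
  maxdigits_of_mod hd0 hd (by
    have := q_pos hd0 hd k
    simpa using mod_q_sub_one hd0 hd (le_refl k)) j h1 h2

lemma zeta_q_sub_one (k : ℕ) : zeta d (q d k - 1) = k + 1 := by
  have hq := q_pos hd0 hd k
  have hqq : q d k - 1 < q d ((k+1) - 1) := by simp; omega
  have hdig : digit d (q d k - 1) (k+1) = 0 := digit_eq_zero_of_lt hd0 hd hqq
  have hd2 := hd (k+1) (by omega)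
  have hle : zeta d (q d k - 1) ≤ k + 1 := zeta_le hd0 hd (by omega) (by omega)
  rcases Nat.lt_or_ge (zeta d (q d k - 1)) (k+1) with h | h
  · exfalso
    exact zeta_digit_ne hd0 hd (q d k - 1)
      (digit_q_sub_one_le hd0 hd (zeta_pos hd0 hd _) (by omega))
  · omega

lemma digit_q_lt {k j : ℕ} (h1 : 1 ≤ j) (h2 : j ≤ k) : digit d (q d k) j = 0 :=
  digit_eq_zero_of_dvd hd0 hd h1 h2 dvd_rfl

lemma digit_q_self (k : ℕ) : digit d (q d k) (k + 1) = 1 := by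
  show q d k / q d k % d (k+1) = 1
  rw [Nat.div_self (q_pos hd0 hd k), Nat.mod_eq_of_lt (by have := hd (k+1) (by omega); omega)]

lemma digit_q_gt {k j : ℕ} (h2 : k + 1 < j) : digit d (q d k) j = 0 := by
  apply digit_eq_zero_of_lt hd0 hd
  exact q_strictMono hd0 hd (show k < j - 1 by omega)

-- sum formula
lemma sum_q (r : ℕ) : ∑ j ∈ Finset.Icc 1 r, (d j - 1) * q d (j - 1) = q d r - 1 := by
  induction r with
  | zero => simp [q_zero hd0]
  | succ m ih =>
    rw [Finset.sum_Icc_succ_top (by omega), ih]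
    have h1 : q d (m+1) = q d m * d (m+1) := q_succ d m
    have h2 : (d (m+1) - 1) * q d ((m+1) - 1) = q d m * d (m+1) - q d m := by
      simp only [Nat.add_sub_cancel]
      rw [Nat.sub_mul, Nat.one_mul, Nat.mul_comm]
    have h3 := q_pos hd0 hd m
    have h4 : q d m ≤ q d m * d (m+1) :=
      Nat.le_mul_of_pos_right _ (by have := hd (m+1) (by omega); omega)
    omega
-- evaluation of s
section sval
variable (p : ℕ → ℝ)

lemma s_succ (n : ℕ) : s d p n (n + 1) = ∏ j ∈ Finset.Icc 1 (zeta d n), p j := by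
  unfold s; rw [if_pos rfl]

lemma s_self (n : ℕ) : s d p n n = 1 - p 1 := by
  unfold s; rw [if_neg (by omega), if_pos rfl]

lemma s_jump {n r : ℕ} (hr1 : 1 ≤ r) (hr2 : r ≤ zeta d n - 1) :
    s d p n (n - (q d r - 1)) = (1 - p (r + 1)) * ∏ j ∈ Finset.Icc 1 r, p j := by
  have hq2 : 2 ≤ q d r := by
    have h1 : q d 1 = d 1 := by
      rw [← q_pred_mul hd0 hd 1 le_rfl]; simp [q_zero hd0]
    have := hd 1 le_rfl
    have hmono : q d 1 ≤ q d r := (q_strictMono hd0 hd).monotone hr1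
    omega
  have hmod : n % q d r = q d r - 1 := mod_q_zeta hd0 hd n hr2
  have hge : q d r - 1 ≤ n := by
    have := Nat.mod_le n (q d r); omega
  set m := n - (q d r - 1) with hm
  have hmn : m ≠ n := by omega
  have hmn1 : m ≠ n + 1 := by omega
  have hEx : ∃ r', 1 ≤ r' ∧ r' + 1 ≤ zeta d n ∧
      n = m + ∑ j ∈ Finset.Icc 1 r', (d j - 1) * q d (j - 1) := by
    refine ⟨r, hr1, ?_, ?_⟩
    · have := zeta_pos hd0 hd n; omega
    · rw [sum_q hd0 hd]; omega
  unfold s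
  rw [if_neg hmn1, if_neg hmn, dif_pos hEx]
  obtain ⟨hc1, hc2, hc3⟩ := hEx.choose_spec
  rw [sum_q hd0 hd] at hc3
  have hq1 : 0 < q d hEx.choose := q_pos hd0 hd _
  have hqq : q d hEx.choose = q d r := by omega
  have hcr : hEx.choose = r := (q_strictMono hd0 hd).injective hqq
  rw [hcr]

lemma s_eq_zero {n m : ℕ} (hm1 : m ≠ n + 1) (hm2 : m ≠ n)
    (hm3 : ∀ r, 1 ≤ r → r ≤ zeta d n - 1 → m ≠ n - (q d r - 1)) : s d p n m = 0 := by
  unfold s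
  rw [if_neg hm1, if_neg hm2, dif_neg]
  rintro ⟨r, h1, h2, h3⟩
  rw [sum_q hd0 hd] at h3
  have hz := zeta_pos hd0 hd n
  have hq1 := q_pos hd0 hd r
  exact hm3 r h1 (by omega) (by omega)

lemma master (w : ℕ → ℂ) (n : ℕ) :
    ∑' m, (s d p n m : ℂ) * w m
      = (∏ j ∈ Finset.Icc 1 (zeta d n), (p j : ℂ)) * w (n + 1) + (1 - (p 1 : ℂ)) * w n
        + ∑ r ∈ Finset.Icc 1 (zeta d n - 1),
            (1 - (p (r + 1) : ℂ)) * (∏ j ∈ Finset.Icc 1 r, (p j : ℂ)) * w (n - (q d r - 1)) := by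
  classical
  have hlt : ∀ r ∈ Finset.Icc 1 (zeta d n - 1), n - (q d r - 1) < n := by
    intro r hr
    rw [Finset.mem_Icc] at hr
    have hmod : n % q d r = q d r - 1 := mod_q_zeta hd0 hd n hr.2
    have hge : q d r - 1 ≤ n := by have := Nat.mod_le n (q d r); omega
    have hq2 : 2 ≤ q d r := by
      have h1 : q d 1 = d 1 := by
        rw [← q_pred_mul hd0 hd 1 le_rfl]; simp [q_zero hd0]
      have := hd 1 le_rfl
      have hmono : q d 1 ≤ q d r := (q_strictMono hd0 hd).monotone hr.1
      omega
    omega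
  set T : Finset ℕ := (Finset.Icc 1 (zeta d n - 1)).image (fun r => n - (q d r - 1)) with hT
  set F : Finset ℕ := insert (n+1) (insert n T) with hFdef
  have hsum : ∑' m, (s d p n m : ℂ) * w m = ∑ m ∈ F, (s d p n m : ℂ) * w m := by
    apply tsum_eq_sum
    intro m hm
    rw [hFdef] at hm
    simp only [Finset.mem_insert, hT, Finset.mem_image, Finset.mem_Icc] at hm
    push_neg at hm
    obtain ⟨h1, h2, h3⟩ := hm
    rw [s_eq_zero hd0 hd p h1 h2 (fun r hr1 hr2 => (h3 r ⟨hr1, hr2⟩).symm), Complex.ofReal_zero,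
      zero_mul]
  rw [hsum, hFdef]
  have hn1T : (n+1) ∉ insert n T := by
    simp only [Finset.mem_insert, hT, Finset.mem_image]
    push_neg
    refine ⟨by omega, fun r hr => ?_⟩
    have := hlt r hr; omega
  have hnT : n ∉ T := by
    rw [hT]; simp only [Finset.mem_image]
    push_neg
    intro r hr
    have := hlt r hr; omega
  rw [Finset.sum_insert hn1T, Finset.sum_insert hnT, hT]
  rw [Finset.sum_image (by
    intro r hr r' hr' heq
    rw [Finset.mem_coe, Finset.mem_Icc] at hr hr'
    beta_reduce at heq
    have h1 : n - (q d r - 1) < n := hlt r (by rw [Finset.mem_Icc]; exact hr)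
    have h2 : n - (q d r' - 1) < n := hlt r' (by rw [Finset.mem_Icc]; exact hr')
    have hmod : n % q d r = q d r - 1 := mod_q_zeta hd0 hd n hr.2
    have hmod' : n % q d r' = q d r' - 1 := mod_q_zeta hd0 hd n hr'.2
    have hge : q d r - 1 ≤ n := by have := Nat.mod_le n (q d r); omega
    have hge' : q d r' - 1 ≤ n := by have := Nat.mod_le n (q d r'); omega
    have hq1 := q_pos hd0 hd r
    have hq1' := q_pos hd0 hd r'
    exact (q_strictMono hd0 hd).injective (show q d r = q d r' by omega))]
  have hS : ∑ r ∈ Finset.Icc 1 (zeta d n - 1), (s d p n (n - (q d r - 1)) : ℂ) * w (n - (q d r - 1))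
      = ∑ r ∈ Finset.Icc 1 (zeta d n - 1),
          (1 - (p (r + 1) : ℂ)) * (∏ j ∈ Finset.Icc 1 r, (p j : ℂ)) * w (n - (q d r - 1)) := by
    apply Finset.sum_congr rfl
    intro r hr
    rw [Finset.mem_Icc] at hr
    rw [s_jump hd0 hd p hr.1 hr.2]
    push_cast
    ring
  rw [s_succ hd0 hd p, s_self hd0 hd p, hS]
  push_cast
  ring

end sval
-- complex side
section cplx
variable (p : ℕ → ℝ) (lam : ℂ)

lemma p_ne (hp : ∀ j, 1 ≤ j → p j ∈ Set.Ioc (0:ℝ) 1) {j : ℕ} (hj : 1 ≤ j) :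
    (p j : ℂ) ≠ 0 := by
  have := (hp j hj).1
  exact_mod_cast ne_of_gt (by exact_mod_cast this : (0:ℝ) < p j)

lemma iota_pow {j : ℕ} (hj : 1 ≤ j) :
    iota d p lam j ^ d j = ftil d p j lam := by
  cases j with
  | zero => omega
  | succ m => rfl

lemma ftil_decomp (hp : ∀ j, 1 ≤ j → p j ∈ Set.Ioc (0:ℝ) 1) (j : ℕ) :
    ftil d p j lam = (1 - (p (j+1) : ℂ)) + (p (j+1) : ℂ) * iota d p lam (j+1) := by
  have hne : (p (j+1) : ℂ) ≠ 0 := p_ne hd0 hd p hp (by omega)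
  rw [iota]
  simp only [Nat.add_sub_cancel]
  field_simp
  ring

lemma vlam_eq_prod {n N : ℕ} (hn : n < q d N) :
    vlam d p lam n = ∏ j ∈ Finset.Icc 1 N, iota d p lam j ^ digit d n j := by
  rw [vlam, finprod_eq_prod_of_mulSupport_subset _
    (s := Finset.range N) (by
      intro r hr
      simp only [Finset.coe_range, Set.mem_Iio]
      by_contra hge
      push_neg at hge
      have hq : n < q d ((r+1) - 1) := by
        simp only [Nat.add_sub_cancel]
        exact lt_of_lt_of_le hn ((q_strictMono hd0 hd).monotone hge)
      have : digit d n (r+1) = 0 := digit_eq_zero_of_lt hd0 hd hq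
      simp [Function.mulSupport, this] at hr)]
  refine Finset.prod_bij' (fun r _ => r + 1) (fun j _ => j - 1) ?_ ?_ ?_ ?_ ?_
  · intro x hx; simp only [Finset.mem_range, Finset.mem_Icc] at hx ⊢; omega
  · intro x hx; simp only [Finset.mem_range, Finset.mem_Icc] at hx ⊢; omega
  · intro x hx; omega
  · intro x hx; simp only [Finset.mem_range, Finset.mem_Icc] at hx ⊢; omega
  · intro x hx; rfl

lemma vlam_zero : vlam d p lam 0 = 1 := by
  rw [vlam_eq_prod hd0 hd p lam (show 0 < q d 0 from q_pos hd0 hd 0)]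
  simp

lemma vlam_q (k : ℕ) : vlam d p lam (q d k) = iota d p lam (k + 1) := by
  rw [vlam_eq_prod hd0 hd p lam (show q d k < q d (k+1) from q_strictMono hd0 hd (by omega))]
  rw [Finset.prod_eq_single (k+1)]
  · rw [digit_q_self hd0 hd, pow_one]
  · intro j hj hne
    rw [Finset.mem_Icc] at hj
    rw [digit_q_lt hd0 hd hj.1 (by omega), pow_zero]
  · intro h
    exfalso
    exact h (by rw [Finset.mem_Icc]; omega)

lemma star (hp : ∀ j, 1 ≤ j → p j ∈ Set.Ioc (0:ℝ) 1) (z : ℕ) :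
    lam * ∏ j ∈ Finset.Ioc 0 z, iota d p lam j ^ (d j - 1)
      = (∏ j ∈ Finset.Icc 1 (z+1), (p j : ℂ)) * iota d p lam (z+1)
        + (1 - (p 1 : ℂ)) * ∏ j ∈ Finset.Ioc 0 z, iota d p lam j ^ (d j - 1)
        + ∑ r ∈ Finset.Icc 1 z, (1 - (p (r+1) : ℂ)) * (∏ j ∈ Finset.Icc 1 r, (p j : ℂ))
            * ∏ j ∈ Finset.Ioc r z, iota d p lam j ^ (d j - 1) := by
  induction z with
  | zero =>
    simp only [Finset.Ioc_self, Finset.prod_empty, Finset.Icc_self, Finset.prod_singleton,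
      mul_one, zero_add, Finset.sum_empty, add_zero]
    have h0 : Finset.Icc 1 0 = (∅ : Finset ℕ) := by simp
    rw [h0, Finset.sum_empty, add_zero]
    have hne : (p 1 : ℂ) ≠ 0 := p_ne hd0 hd p hp le_rfl
    have : iota d p lam 1 = (lam - (1 - (p 1:ℂ))) / (p 1 : ℂ) := by
      rw [iota]; rfl
    rw [this]
    field_simp
    try ring
  | succ z ih =>
    have hdz := hd (z+1) (by omega)
    set X := iota d p lam (z+1) ^ (d (z+1) - 1) with hX
    have hsplit : ∏ j ∈ Finset.Ioc 0 (z+1), iota d p lam j ^ (d j - 1)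
        = (∏ j ∈ Finset.Ioc 0 z, iota d p lam j ^ (d j - 1)) * X :=
      Finset.prod_Ioc_succ_top (Nat.zero_le _) _
    have hpow : iota d p lam (z+1) * X = ftil d p (z+1) lam := by
      rw [hX, ← pow_succ']
      rw [show d (z+1) - 1 + 1 = d (z+1) by omega]
      exact iota_pow hd0 hd p lam (by omega)
    have hdec : ftil d p (z+1) lam
        = (1 - (p (z+2) : ℂ)) + (p (z+2) : ℂ) * iota d p lam (z+2) := ftil_decomp hd0 hd p lam hp (z+1)
    have hpi : ∏ j ∈ Finset.Icc 1 (z+2), (p j : ℂ)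
        = (∏ j ∈ Finset.Icc 1 (z+1), (p j : ℂ)) * (p (z+2) : ℂ) :=
      Finset.prod_Icc_succ_top (by omega) _
    have hsum : ∑ r ∈ Finset.Icc 1 (z+1), (1 - (p (r+1) : ℂ)) * (∏ j ∈ Finset.Icc 1 r, (p j : ℂ))
            * ∏ j ∈ Finset.Ioc r (z+1), iota d p lam j ^ (d j - 1)
        = (∑ r ∈ Finset.Icc 1 z, (1 - (p (r+1) : ℂ)) * (∏ j ∈ Finset.Icc 1 r, (p j : ℂ))
            * ∏ j ∈ Finset.Ioc r z, iota d p lam j ^ (d j - 1)) * X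
          + (1 - (p (z+2) : ℂ)) * (∏ j ∈ Finset.Icc 1 (z+1), (p j : ℂ)) := by
      rw [Finset.sum_Icc_succ_top (by omega : 1 ≤ z + 1)]
      rw [Finset.sum_mul]
      congr 1
      · apply Finset.sum_congr rfl
        intro r hr
        rw [Finset.mem_Icc] at hr
        rw [Finset.prod_Ioc_succ_top (by omega : r ≤ z)]
        ring
      · rw [Finset.Ioc_self, Finset.prod_empty, mul_one]
        try norm_num
        try ring
    rw [hsplit, hsum, hpi]
    have lhs : lam * ((∏ j ∈ Finset.Ioc 0 z, iota d p lam j ^ (d j - 1)) * X)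
        = (lam * ∏ j ∈ Finset.Ioc 0 z, iota d p lam j ^ (d j - 1)) * X := by ring
    rw [lhs, ih]
    have key : (∏ j ∈ Finset.Icc 1 (z+1), (p j : ℂ)) * iota d p lam (z+1) * X
        = (1 - (p (z+2) : ℂ)) * (∏ j ∈ Finset.Icc 1 (z+1), (p j : ℂ))
          + (∏ j ∈ Finset.Icc 1 (z+1), (p j : ℂ)) * (p (z+2) : ℂ) * iota d p lam (z+2) := by
      rw [mul_assoc, hpow, hdec]; ring
    calc ((∏ j ∈ Finset.Icc 1 (z+1), (p j : ℂ)) * iota d p lam (z+1)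
          + (1 - (p 1 : ℂ)) * ∏ j ∈ Finset.Ioc 0 z, iota d p lam j ^ (d j - 1)
          + ∑ r ∈ Finset.Icc 1 z, (1 - (p (r+1) : ℂ)) * (∏ j ∈ Finset.Icc 1 r, (p j : ℂ))
              * ∏ j ∈ Finset.Ioc r z, iota d p lam j ^ (d j - 1)) * X
        = (∏ j ∈ Finset.Icc 1 (z+1), (p j : ℂ)) * iota d p lam (z+1) * X
          + (1 - (p 1 : ℂ)) * ((∏ j ∈ Finset.Ioc 0 z, iota d p lam j ^ (d j - 1)) * X)
          + (∑ r ∈ Finset.Icc 1 z, (1 - (p (r+1) : ℂ)) * (∏ j ∈ Finset.Icc 1 r, (p j : ℂ))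
              * ∏ j ∈ Finset.Ioc r z, iota d p lam j ^ (d j - 1)) * X := by ring
      _ = _ := by rw [key]; ring

end cplx
-- eigen identity
section eigsec
variable (p : ℕ → ℝ) (lam : ℂ)

lemma eig (hp : ∀ j, 1 ≤ j → p j ∈ Set.Ioc (0:ℝ) 1) (n : ℕ) :
    ∑' m, (s d p n m : ℂ) * vlam d p lam m = lam * vlam d p lam n := by
  obtain ⟨z, hz⟩ : ∃ z, zeta d n = z + 1 :=
    ⟨zeta d n - 1, by have := zeta_pos hd0 hd n; omega⟩
  set N := n + 1 + z + 1 with hN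
  have hnN : n + 1 < q d N := lt_of_le_of_lt (by omega) (lt_q_self hd0 hd N)
  -- v n
  have hvn : vlam d p lam n
      = (∏ j ∈ Finset.Ioc 0 z, iota d p lam j ^ (d j - 1))
        * (iota d p lam (z+1) ^ digit d n (z+1)
            * ∏ j ∈ Finset.Ioc (z+1) N, iota d p lam j ^ digit d n j) := by
    rw [vlam_eq_prod hd0 hd p lam (show n < q d N by omega), (by simpa using Finset.Icc_add_one_left_eq_Ioc (0 : ℕ) N : Finset.Icc 1 N = Finset.Ioc 0 N),
      ← Finset.prod_Ioc_consecutive _ (Nat.zero_le z) (show z ≤ N by omega),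
      ← Finset.prod_Ioc_consecutive _ (show z ≤ z+1 by omega) (show z+1 ≤ N by omega),
      Nat.Ioc_succ_singleton, Finset.prod_singleton]
    congr 1
    apply Finset.prod_congr rfl
    intro j hj
    rw [Finset.mem_Ioc] at hj
    rw [digit_of_lt_zeta hd0 hd (by omega) (by omega)]
  -- v (n+1)
  have hvn1 : vlam d p lam (n+1)
      = iota d p lam (z+1)
        * (iota d p lam (z+1) ^ digit d n (z+1)
            * ∏ j ∈ Finset.Ioc (z+1) N, iota d p lam j ^ digit d n j) := by
    rw [vlam_eq_prod hd0 hd p lam (show n + 1 < q d N by omega), (by simpa using Finset.Icc_add_one_left_eq_Ioc (0 : ℕ) N : Finset.Icc 1 N = Finset.Ioc 0 N),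
      ← Finset.prod_Ioc_consecutive _ (Nat.zero_le z) (show z ≤ N by omega),
      ← Finset.prod_Ioc_consecutive _ (show z ≤ z+1 by omega) (show z+1 ≤ N by omega),
      Nat.Ioc_succ_singleton, Finset.prod_singleton]
    have h1 : ∏ j ∈ Finset.Ioc 0 z, iota d p lam j ^ digit d (n+1) j = 1 := by
      apply Finset.prod_eq_one
      intro j hj
      rw [Finset.mem_Ioc] at hj
      rw [digit_add_one_lt hd0 hd (by omega) (by omega), pow_zero]
    have h2 : digit d (n+1) (z+1) = digit d n (z+1) + 1 := by
      have := digit_add_one_zeta hd0 hd n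
      rw [hz] at this
      exact this
    have h3 : ∏ j ∈ Finset.Ioc (z+1) N, iota d p lam j ^ digit d (n+1) j
        = ∏ j ∈ Finset.Ioc (z+1) N, iota d p lam j ^ digit d n j := by
      apply Finset.prod_congr rfl
      intro j hj
      rw [Finset.mem_Ioc] at hj
      rw [digit_add_one_gt hd0 hd (by omega)]
    rw [h1, h2, h3, one_mul, pow_succ]
    ring
  -- v (n - (q r - 1))
  have hvr : ∀ r ∈ Finset.Icc 1 z, vlam d p lam (n - (q d r - 1))
      = (∏ j ∈ Finset.Ioc r z, iota d p lam j ^ (d j - 1))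
        * (iota d p lam (z+1) ^ digit d n (z+1)
            * ∏ j ∈ Finset.Ioc (z+1) N, iota d p lam j ^ digit d n j) := by
    intro r hr
    rw [Finset.mem_Icc] at hr
    have hsd := sub_digits hd0 hd hr.1 (show r < zeta d n by omega)
    rw [vlam_eq_prod hd0 hd p lam (show n - (q d r - 1) < q d N by omega), (by simpa using Finset.Icc_add_one_left_eq_Ioc (0 : ℕ) N : Finset.Icc 1 N = Finset.Ioc 0 N),
      ← Finset.prod_Ioc_consecutive _ (Nat.zero_le r) (show r ≤ N by omega),
      ← Finset.prod_Ioc_consecutive _ (show r ≤ z by omega) (show z ≤ N by omega),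
      ← Finset.prod_Ioc_consecutive _ (show z ≤ z+1 by omega) (show z+1 ≤ N by omega),
      Nat.Ioc_succ_singleton, Finset.prod_singleton]
    have h1 : ∏ j ∈ Finset.Ioc 0 r, iota d p lam j ^ digit d (n - (q d r - 1)) j = 1 := by
      apply Finset.prod_eq_one
      intro j hj
      rw [Finset.mem_Ioc] at hj
      rw [hsd.1 j (by omega) (by omega), pow_zero]
    have h2 : ∏ j ∈ Finset.Ioc r z, iota d p lam j ^ digit d (n - (q d r - 1)) j
        = ∏ j ∈ Finset.Ioc r z, iota d p lam j ^ (d j - 1) := by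
      apply Finset.prod_congr rfl
      intro j hj
      rw [Finset.mem_Ioc] at hj
      rw [hsd.2 j (by omega), digit_of_lt_zeta hd0 hd (by omega) (by omega)]
    have h3 : digit d (n - (q d r - 1)) (z+1) = digit d n (z+1) := hsd.2 (z+1) (by omega)
    have h4 : ∏ j ∈ Finset.Ioc (z+1) N, iota d p lam j ^ digit d (n - (q d r - 1)) j
        = ∏ j ∈ Finset.Ioc (z+1) N, iota d p lam j ^ digit d n j := by
      apply Finset.prod_congr rfl
      intro j hj
      rw [Finset.mem_Ioc] at hj
      rw [hsd.2 j (by omega)]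
    rw [h1, h2, h3, h4, one_mul]
  rw [master hd0 hd p _ n, hz]
  simp only [Nat.add_sub_cancel]
  have hsum : ∑ r ∈ Finset.Icc 1 z,
        (1 - (p (r+1) : ℂ)) * (∏ j ∈ Finset.Icc 1 r, (p j : ℂ))
          * vlam d p lam (n - (q d r - 1))
      = (∑ r ∈ Finset.Icc 1 z,
          (1 - (p (r+1) : ℂ)) * (∏ j ∈ Finset.Icc 1 r, (p j : ℂ))
            * ∏ j ∈ Finset.Ioc r z, iota d p lam j ^ (d j - 1))
        * (iota d p lam (z+1) ^ digit d n (z+1)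
            * ∏ j ∈ Finset.Ioc (z+1) N, iota d p lam j ^ digit d n j) := by
    rw [Finset.sum_mul]
    apply Finset.sum_congr rfl
    intro r hr
    rw [hvr r hr]
    ring
  rw [hvn1, hvn, hsum]
  have hstar := star hd0 hd p lam hp z
  calc (∏ j ∈ Finset.Icc 1 (z+1), (p j : ℂ))
        * (iota d p lam (z+1) * (iota d p lam (z+1) ^ digit d n (z+1)
            * ∏ j ∈ Finset.Ioc (z+1) N, iota d p lam j ^ digit d n j))
      + (1 - (p 1 : ℂ)) * ((∏ j ∈ Finset.Ioc 0 z, iota d p lam j ^ (d j - 1))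
          * (iota d p lam (z+1) ^ digit d n (z+1)
            * ∏ j ∈ Finset.Ioc (z+1) N, iota d p lam j ^ digit d n j))
      + (∑ r ∈ Finset.Icc 1 z,
          (1 - (p (r+1) : ℂ)) * (∏ j ∈ Finset.Icc 1 r, (p j : ℂ))
            * ∏ j ∈ Finset.Ioc r z, iota d p lam j ^ (d j - 1))
        * (iota d p lam (z+1) ^ digit d n (z+1)
            * ∏ j ∈ Finset.Ioc (z+1) N, iota d p lam j ^ digit d n j)
      = ((∏ j ∈ Finset.Icc 1 (z+1), (p j : ℂ)) * iota d p lam (z+1)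
          + (1 - (p 1 : ℂ)) * ∏ j ∈ Finset.Ioc 0 z, iota d p lam j ^ (d j - 1)
          + ∑ r ∈ Finset.Icc 1 z,
              (1 - (p (r+1) : ℂ)) * (∏ j ∈ Finset.Icc 1 r, (p j : ℂ))
                * ∏ j ∈ Finset.Ioc r z, iota d p lam j ^ (d j - 1))
        * (iota d p lam (z+1) ^ digit d n (z+1)
            * ∏ j ∈ Finset.Ioc (z+1) N, iota d p lam j ^ digit d n j) := by ring
    _ = (lam * ∏ j ∈ Finset.Ioc 0 z, iota d p lam j ^ (d j - 1))
        * (iota d p lam (z+1) ^ digit d n (z+1)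
            * ∏ j ∈ Finset.Ioc (z+1) N, iota d p lam j ^ digit d n j) := by rw [← hstar]
    _ = _ := by ring

end eigsec
-- truncation
section truncsec
variable (p : ℕ → ℝ) (lam : ℂ)

def wtr (d : ℕ → ℕ) (p : ℕ → ℝ) (lam : ℂ) (k : ℕ) : ℕ → ℂ :=
  fun n => if n < q d k then vlam d p lam n else 0

omit hd0 hd in
lemma wtr_lt {k n : ℕ} (h : n < q d k) : wtr d p lam k n = vlam d p lam n := if_pos h

omit hd0 hd in
lemma wtr_ge {k n : ℕ} (h : q d k ≤ n) : wtr d p lam k n = 0 := if_neg (by omega)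

lemma trunc_lt (hp : ∀ j, 1 ≤ j → p j ∈ Set.Ioc (0:ℝ) 1) {k n : ℕ} (hn : n + 1 < q d k) :
    ∑' m, (s d p n m : ℂ) * wtr d p lam k m = lam * wtr d p lam k n := by
  rw [master hd0 hd p _ n, wtr_lt p lam hn, wtr_lt p lam (show n < q d k by omega)]
  have hs : ∀ r ∈ Finset.Icc 1 (zeta d n - 1),
      wtr d p lam k (n - (q d r - 1)) = vlam d p lam (n - (q d r - 1)) := by
    intro r hr
    exact wtr_lt p lam (by omega)
  rw [Finset.sum_congr rfl (fun r hr => by rw [hs r hr])]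
  have heig := eig hd0 hd p lam hp n
  rw [master hd0 hd p (vlam d p lam) n] at heig
  exact heig

lemma trunc_boundary (hp : ∀ j, 1 ≤ j → p j ∈ Set.Ioc (0:ℝ) 1) (k : ℕ) :
    (∑' m, (s d p (q d k - 1) m : ℂ) * wtr d p lam k m)
        - lam * wtr d p lam k (q d k - 1)
      = -((∏ j ∈ Finset.Icc 1 (k+1), (p j : ℂ)) * iota d p lam (k+1)) := by
  have hq := q_pos hd0 hd k
  set n := q d k - 1 with hn
  have hn1 : n + 1 = q d k := by omega
  have hz : zeta d n = k + 1 := zeta_q_sub_one hd0 hd k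
  have heig := eig hd0 hd p lam hp n
  rw [master hd0 hd p _ n] at heig ⊢
  rw [hz] at heig ⊢
  have e1 : wtr d p lam k (n + 1) = 0 := by rw [hn1]; exact wtr_ge p lam le_rfl
  have e2 : wtr d p lam k n = vlam d p lam n := wtr_lt p lam (by omega)
  have e3 : ∀ r ∈ Finset.Icc 1 ((k+1) - 1),
      wtr d p lam k (n - (q d r - 1)) = vlam d p lam (n - (q d r - 1)) := by
    intro r hr
    exact wtr_lt p lam (by omega)
  rw [e1, e2, Finset.sum_congr rfl (fun r hr => by rw [e3 r hr]), mul_zero]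
  have hv1 : vlam d p lam (n + 1) = iota d p lam (k+1) := by
    rw [hn1]; exact vlam_q hd0 hd p lam k
  rw [hv1] at heig
  -- heig : A * iota + B + S = lam * v n ; goal : 0 + B + S - lam * v n = -(A * iota)
  linear_combination heig

lemma jump_low {k n r : ℕ} (hn : q d k ≤ n) (hr1 : 1 ≤ r) (hr2 : r ≤ zeta d n - 1)
    (hlt : n - (q d r - 1) < q d k) : n = q d r - 1 ∧ k < r := by
  have hmod : n % q d r = q d r - 1 := mod_q_zeta hd0 hd n hr2
  have hqr := q_pos hd0 hd r
  have hqk := q_pos hd0 hd k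
  have hda := Nat.div_add_mod n (q d r)
  have hge : q d r - 1 ≤ n := by have := Nat.mod_le n (q d r); omega
  have hm : n - (q d r - 1) = q d r * (n / q d r) := by omega
  rcases Nat.eq_zero_or_pos (n / q d r) with h0 | h0
  · -- m = 0, n = q d r - 1
    have hn' : n = q d r - 1 := by
      rw [h0, Nat.mul_zero] at hm; omega
    refine ⟨hn', ?_⟩
    by_contra hkr
    push_neg at hkr
    have : q d r ≤ q d k := (q_strictMono hd0 hd).monotone hkr
    omega
  · exfalso
    have hmge : q d r ≤ n - (q d r - 1) := by
      rw [hm]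
      exact Nat.le_mul_of_pos_right _ h0
    have hrk : r < k := by
      by_contra hge'
      push_neg at hge'
      have : q d k ≤ q d r := (q_strictMono hd0 hd).monotone hge'
      omega
    obtain ⟨c, hc⟩ : q d r ∣ q d k := q_dvd_q hd0 hd (by omega)
    have hdvd2 : q d r ∣ q d k - (n - (q d r - 1)) :=
      Nat.dvd_sub ⟨c, hc⟩ ⟨n / q d r, hm⟩
    have hpos2 : 0 < q d k - (n - (q d r - 1)) := by omega
    have : q d r ≤ q d k - (n - (q d r - 1)) := Nat.le_of_dvd hpos2 hdvd2
    omega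

lemma trunc_upper (hp : ∀ j, 1 ≤ j → p j ∈ Set.Ioc (0:ℝ) 1) {k n : ℕ} (hn : q d k ≤ n) :
    (∑' m, (s d p n m : ℂ) * wtr d p lam k m) - lam * wtr d p lam k n = 0
    ∨ ∃ r, k < r ∧ n = q d r - 1 ∧
        (∑' m, (s d p n m : ℂ) * wtr d p lam k m) - lam * wtr d p lam k n
          = (((1 - p (r+1)) * ∏ j ∈ Finset.Icc 1 r, p j : ℝ) : ℂ) := by
  have hqk := q_pos hd0 hd k
  rw [master hd0 hd p _ n]
  rw [wtr_ge p lam hn, wtr_ge p lam (show q d k ≤ n + 1 by omega)]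
  simp only [mul_zero, zero_add, sub_zero]
  by_cases hex : ∃ r₀ ∈ Finset.Icc 1 (zeta d n - 1), n - (q d r₀ - 1) < q d k
  · right
    obtain ⟨r₀, hr₀mem, hr₀lt⟩ := hex
    rw [Finset.mem_Icc] at hr₀mem
    obtain ⟨hnr₀, hkr₀⟩ := jump_low hd0 hd hn hr₀mem.1 hr₀mem.2 hr₀lt
    refine ⟨r₀, hkr₀, hnr₀, ?_⟩
    have hzn : zeta d n = r₀ + 1 := by rw [hnr₀]; exact zeta_q_sub_one hd0 hd r₀
    rw [hzn]
    simp only [Nat.add_sub_cancel]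
    rw [Finset.sum_eq_single r₀]
    · have hm0 : n - (q d r₀ - 1) = 0 := by
        have := q_pos hd0 hd r₀; omega
      rw [hm0, wtr_lt p lam hqk, vlam_zero hd0 hd p lam, mul_one]
      push_cast
      ring
    · intro r hr hne
      rw [Finset.mem_Icc] at hr
      have hwz : wtr d p lam k (n - (q d r - 1)) = 0 := by
        rcases Nat.lt_or_ge (n - (q d r - 1)) (q d k) with hlt | hge
        · exfalso
          have := jump_low hd0 hd hn hr.1 (by omega) hlt
          have hq1 := q_pos hd0 hd r
          have hq2 := q_pos hd0 hd r₀
          have : q d r = q d r₀ := by omega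
          exact hne ((q_strictMono hd0 hd).injective this)
        · exact wtr_ge p lam hge
      rw [hwz, mul_zero]
    · intro habs
      exfalso
      exact habs (by rw [Finset.mem_Icc]; omega)
  · left
    push_neg at hex
    apply Finset.sum_eq_zero
    intro r hr
    have hge : q d k ≤ n - (q d r - 1) := hex r hr
    rw [wtr_ge p lam hge, mul_zero]

end truncsec
end prelim

/-- The point spectrum of a continuous linear operator. -/
def pointSpectrum {M : Type*} [NormedAddCommGroup M] [NormedSpace ℂ M]
    (T : M →L[ℂ] M) : Set ℂ :=
  {lam | ∃ v, v ≠ 0 ∧ T v = lam • v}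

/-- The residual spectrum: `T - λI` is injective but its range is not dense. -/
def residualSpectrum {M : Type*} [NormedAddCommGroup M] [NormedSpace ℂ M]
    (T : M →L[ℂ] M) : Set ℂ :=
  {lam | Function.Injective ⇑(T - lam • (1 : M →L[ℂ] M)) ∧
    ¬ DenseRange ⇑(T - lam • (1 : M →L[ℂ] M))}

/-- The continuous spectrum: `T - λI` is injective with dense range, but not surjective. -/
def continuousSpectrum {M : Type*} [NormedAddCommGroup M] [NormedSpace ℂ M]
    (T : M →L[ℂ] M) : Set ℂ :=
  {lam | Function.Injective ⇑(T - lam • (1 : M →L[ℂ] M)) ∧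
    DenseRange ⇑(T - lam • (1 : M →L[ℂ] M)) ∧
    Set.range ⇑(T - lam • (1 : M →L[ℂ] M)) ≠ Set.univ}

set_option maxHeartbeats 1000000 in
/-- every `λ ∈ E` which is not an eigenvalue of `S` on `l^α`
belongs to the approximate point spectrum of `S` on `l^α`. -/
theorem stmt8 (d : ℕ → ℕ) (p : ℕ → ℝ)
    (hd0 : d 0 = 1) (hd : ∀ j, 1 ≤ j → 2 ≤ d j)
    (hp : ∀ j, 1 ≤ j → p j ∈ Set.Ioc (0 : ℝ) 1)
    (α : ℝ≥0∞) [Fact (1 ≤ α)] (hα : α ≠ ⊤)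
    (Ta : lp (fun _ : ℕ => ℂ) α →L[ℂ] lp (fun _ : ℕ => ℂ) α)
    (hTa : ∀ (w : lp (fun _ : ℕ => ℂ) α) (n : ℕ),
      Ta w n = ∑' m : ℕ, (s d p n m : ℂ) * w m)
    (lam : ℂ) (hlam : lam ∈ E d p)
    (hnot : ¬ ∃ v : lp (fun _ : ℕ => ℂ) α, v ≠ 0 ∧ Ta v = lam • v) :
    ∃ u : ℕ → lp (fun _ : ℕ => ℂ) α, (∀ k, ‖u k‖ = 1) ∧
      Filter.Tendsto (fun k => ‖Ta (u k) - lam • u k‖) Filter.atTop (nhds 0) := by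
  classical
  have hone : (1 : ℝ≥0∞) ≤ α := Fact.out
  have hα0 : α ≠ 0 := by
    intro h; rw [h] at hone; simp at hone
  have ht0 : 0 < α.toReal := ENNReal.toReal_pos hα0 hα
  have ht1 : 1 ≤ α.toReal := by
    rw [← ENNReal.toReal_one]
    exact ENNReal.toReal_mono hα hone
  -- uniform bound M on the orbit
  have hlam' : Filter.limsup (fun j => (‖ftil d p j lam‖₊ : ℝ≥0∞)) Filter.atTop < ⊤ := hlam
  obtain ⟨b, hb1, hb2⟩ := exists_between hlam'
  have hev : ∀ᶠ j in Filter.atTop, (‖ftil d p j lam‖₊ : ℝ≥0∞) < b :=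
    Filter.eventually_lt_of_limsup_lt hb1
  obtain ⟨J, hJ⟩ := Filter.eventually_atTop.mp hev
  have hM : ∀ j, ‖ftil d p j lam‖ ≤ b.toReal + ∑ i ∈ Finset.range J, ‖ftil d p i lam‖ := by
    intro j
    rcases le_or_gt J j with h | h
    · have h2 : ‖ftil d p j lam‖ ≤ b.toReal := by
        have h3 := ENNReal.toReal_mono hb2.ne (hJ j h).le
        simpa using h3
      have h4 := Finset.sum_nonneg (fun i (_ : i ∈ Finset.range J) => norm_nonneg (ftil d p i lam))
      linarith
    · have h1 : ‖ftil d p j lam‖ ≤ ∑ i ∈ Finset.range J, ‖ftil d p i lam‖ :=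
        Finset.single_le_sum (f := fun i => ‖ftil d p i lam‖)
          (fun i _ => norm_nonneg _) (Finset.mem_range.mpr h)
      have h5 : (0:ℝ) ≤ b.toReal := ENNReal.toReal_nonneg
      linarith
  set M := b.toReal + ∑ i ∈ Finset.range J, ‖ftil d p i lam‖ with hMdef
  have hM0 : 0 ≤ M := le_trans (norm_nonneg _) (hM 0)
  -- products of probabilities
  have hPRpos : ∀ r, 0 < ∏ j ∈ Finset.Icc 1 r, p j :=
    fun r => Finset.prod_pos (fun j hj => (hp j (Finset.mem_Icc.mp hj).1).1)
  have hPRle1 : ∀ r, ∏ j ∈ Finset.Icc 1 r, p j ≤ 1 :=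
    fun r => Finset.prod_le_one (fun j hj => ((hp j (Finset.mem_Icc.mp hj).1).1).le)
      (fun j hj => (hp j (Finset.mem_Icc.mp hj).1).2)
  have hPRsucc : ∀ r, ∏ j ∈ Finset.Icc 1 (r+1), p j = (∏ j ∈ Finset.Icc 1 r, p j) * p (r+1) :=
    fun r => Finset.prod_Icc_succ_top (by omega) _
  have hPRmono : ∀ r, ∏ j ∈ Finset.Icc 1 (r+1), p j ≤ ∏ j ∈ Finset.Icc 1 r, p j := by
    intro r
    rw [hPRsucc r]
    have h1 := hPRpos r
    have h2 := (hp (r+1) (by omega)).2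
    have h3 := (hp (r+1) (by omega)).1
    nlinarith
  -- bound on boundary coefficient
  have hbv : ∀ k, ‖(∏ j ∈ Finset.Icc 1 (k+1), (p j : ℂ)) * iota d p lam (k+1)‖ ≤ M + 1 := by
    intro k
    have hfact : (∏ j ∈ Finset.Icc 1 (k+1), (p j : ℂ)) * iota d p lam (k+1)
        = (∏ j ∈ Finset.Icc 1 k, (p j : ℂ)) * (ftil d p k lam - (1 - (p (k+1) : ℂ))) := by
      rw [Finset.prod_Icc_succ_top (show 1 ≤ k + 1 by omega)]
      have hdec := ftil_decomp hd0 hd p lam hp k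
      linear_combination (-(∏ j ∈ Finset.Icc 1 k, (p j : ℂ))) * hdec
    rw [hfact, norm_mul]
    have h1 : ‖∏ j ∈ Finset.Icc 1 k, (p j : ℂ)‖ ≤ 1 := by
      rw [norm_prod]
      apply Finset.prod_le_one
      · intro j hj; exact norm_nonneg _
      · intro j hj
        rw [Complex.norm_real, Real.norm_eq_abs]
        rw [abs_of_pos (hp j (Finset.mem_Icc.mp hj).1).1]
        exact (hp j (Finset.mem_Icc.mp hj).1).2
    have h2 : ‖ftil d p k lam - (1 - (p (k+1) : ℂ))‖ ≤ M + 1 := by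
      calc ‖ftil d p k lam - (1 - (p (k+1) : ℂ))‖
          ≤ ‖ftil d p k lam‖ + ‖1 - (p (k+1) : ℂ)‖ := norm_sub_le _ _
        _ ≤ M + 1 := by
            have h3 : ‖1 - (p (k+1) : ℂ)‖ ≤ 1 := by
              have : (1 : ℂ) - (p (k+1) : ℂ) = ((1 - p (k+1) : ℝ) : ℂ) := by push_cast; ring
              rw [this, Complex.norm_real, Real.norm_eq_abs]
              rw [abs_of_nonneg (by have := (hp (k+1) (by omega)).2; linarith)]
              have := (hp (k+1) (by omega)).1; linarith
            have := hM k
            linarith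
    calc ‖∏ j ∈ Finset.Icc 1 k, (p j : ℂ)‖ * ‖ftil d p k lam - (1 - (p (k+1) : ℂ))‖
        ≤ 1 * (M + 1) := by
          apply mul_le_mul h1 h2 (norm_nonneg _) (by norm_num)
      _ = M + 1 := one_mul _
  -- the truncated vectors
  have hmem : ∀ k, Memℓp (wtr d p lam k) α := by
    intro k
    apply Memℓp.of_exponent_ge (q := 0) _ (zero_le : (0 : ℝ≥0∞) ≤ α)
    rw [memℓp_zero_iff]
    apply (Set.finite_Iio (q d k)).subset
    intro n hn
    simp only [Set.mem_setOf_eq] at hn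
    simp only [Set.mem_Iio]
    by_contra h
    push_neg at h
    exact hn (wtr_ge p lam h)
  set W : ℕ → lp (fun _ : ℕ => ℂ) α := fun k => ⟨wtr d p lam k, hmem k⟩ with hWdef
  have hWcoe : ∀ k n, (W k : ∀ _ : ℕ, ℂ) n = wtr d p lam k n := fun k n => rfl
  -- v is not in ℓᵅ
  have hnotsum : ¬ Summable (fun n => ‖vlam d p lam n‖ ^ α.toReal) := by
    intro hsumm
    have hvmem : Memℓp (vlam d p lam) α := memℓp_gen hsumm
    apply hnot
    refine ⟨⟨vlam d p lam, hvmem⟩, ?_, ?_⟩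
    · intro h0
      have h1 : vlam d p lam 0 = 0 := by
        have h2 := congrArg (fun x : lp (fun _ : ℕ => ℂ) α => x 0) h0
        simpa using h2
      rw [vlam_zero hd0 hd p lam] at h1
      exact one_ne_zero h1
    · apply lp.ext
      funext n
      rw [hTa]
      simp only [lp.coeFn_smul, Pi.smul_apply, smul_eq_mul]
      exact eig hd0 hd p lam hp n
  -- norm of W k
  have hWnorm : ∀ k, ‖W k‖ ^ α.toReal = ∑ n ∈ Finset.range (q d k), ‖vlam d p lam n‖ ^ α.toReal := by
    intro k
    rw [lp.norm_rpow_eq_tsum ht0 (W k)]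
    rw [tsum_eq_sum (s := Finset.range (q d k))
      (fun n hn => by
        rw [hWcoe, wtr_ge p lam (by simpa [Finset.mem_range, not_lt] using hn)]
        simp [Real.zero_rpow (ne_of_gt ht0)])]
    apply Finset.sum_congr rfl
    intro n hn
    rw [hWcoe, wtr_lt p lam (Finset.mem_range.mp hn)]
  have hWpos : ∀ k, 0 < ‖W k‖ := by
    intro k
    have h1 : (W k : ∀ _ : ℕ, ℂ) 0 = 1 := by
      rw [hWcoe, wtr_lt p lam (q_pos hd0 hd k)]
      exact vlam_zero hd0 hd p lam
    apply norm_pos_iff.mpr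
    intro h0
    rw [h0] at h1
    simp at h1
  -- divergence of norms
  have hdiv : Filter.Tendsto (fun k => ‖W k‖) Filter.atTop Filter.atTop := by
    have h1 : Filter.Tendsto (fun N => ∑ n ∈ Finset.range N, ‖vlam d p lam n‖ ^ α.toReal)
        Filter.atTop Filter.atTop :=
      (not_summable_iff_tendsto_nat_atTop_of_nonneg
        (fun n => Real.rpow_nonneg (norm_nonneg _) _)).mp hnotsum
    have h2 : Filter.Tendsto (fun k => q d k) Filter.atTop Filter.atTop :=
      Filter.tendsto_atTop_mono (fun k => (lt_q_self hd0 hd k).le) Filter.tendsto_id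
    have h3 : Filter.Tendsto (fun k => ‖W k‖ ^ α.toReal) Filter.atTop Filter.atTop := by
      have h4 := h1.comp h2
      apply h4.congr
      intro k
      exact (hWnorm k).symm
    have h5 : Filter.Tendsto (fun x : ℝ => x ^ (α.toReal)⁻¹) Filter.atTop Filter.atTop :=
      tendsto_rpow_atTop (by positivity)
    have h6 := h5.comp h3
    apply h6.congr
    intro k
    simp only [Function.comp_apply]
    exact Real.rpow_rpow_inv (norm_nonneg _) (ne_of_gt ht0)
  -- the defect vectors
  set Dk : ℕ → lp (fun _ : ℕ => ℂ) α := fun k => Ta (W k) - lam • W k with hDkdef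
  have hDcoe : ∀ k n, (Dk k : ∀ _ : ℕ, ℂ) n
      = (∑' m, (s d p n m : ℂ) * wtr d p lam k m) - lam * wtr d p lam k n := by
    intro k n
    rw [hDkdef]
    simp only [lp.coeFn_sub, Pi.sub_apply, lp.coeFn_smul, Pi.smul_apply, smul_eq_mul]
    rw [hTa (W k) n]
  -- bound on the defect
  have hDbound : ∀ k, ‖Dk k‖ ^ α.toReal ≤ (M + 1) ^ α.toReal + 1 := by
    intro k
    rw [lp.norm_rpow_eq_tsum ht0 (Dk k)]
    apply tsum_le_of_sum_le'
    · positivity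
    intro F
    set N := F.sup id with hNdef
    have hFN : ∀ n ∈ F, n ≤ N := fun n hn => Finset.le_sup (f := id) hn
    set T : Finset ℕ := (Finset.range (N+1)).image (fun r => q d r - 1) with hTdef
    have hsupp : ∀ n ∈ F, n ∉ T → ‖(Dk k : ∀ _ : ℕ, ℂ) n‖ ^ α.toReal = 0 := by
      intro n hnF hnT
      have hqk := q_pos hd0 hd k
      have hD0 : (Dk k : ∀ _ : ℕ, ℂ) n = 0 := by
        rw [hDcoe]
        rcases Nat.lt_or_ge (n+1) (q d k) with hc1 | hc1
        · rw [trunc_lt hd0 hd p lam hp hc1, sub_self]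
        · rcases Nat.eq_or_lt_of_le hc1 with hc2 | hc2
          · exfalso
            apply hnT
            rw [hTdef]
            apply Finset.mem_image.mpr
            refine ⟨k, Finset.mem_range.mpr ?_, by omega⟩
            have hkq := lt_q_self hd0 hd k
            have := hFN n hnF
            omega
          · have hge : q d k ≤ n := by omega
            rcases trunc_upper hd0 hd p lam hp hge with h0 | ⟨r, hkr, hnr, hval⟩
            · exact h0
            · exfalso
              apply hnT
              rw [hTdef]
              apply Finset.mem_image.mpr
              refine ⟨r, Finset.mem_range.mpr ?_, by omega⟩
              have hrq := lt_q_self hd0 hd r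
              have := hFN n hnF
              omega
      rw [hD0]
      simp [Real.zero_rpow (ne_of_gt ht0)]
    have hstep1 : ∑ n ∈ F, ‖(Dk k : ∀ _ : ℕ, ℂ) n‖ ^ α.toReal
        = ∑ n ∈ F ∩ T, ‖(Dk k : ∀ _ : ℕ, ℂ) n‖ ^ α.toReal := by
      apply (Finset.sum_subset Finset.inter_subset_left ?_).symm
      intro x hx hx'
      exact hsupp x hx (fun hT => hx' (Finset.mem_inter.mpr ⟨hx, hT⟩))
    have hstep2 : ∑ n ∈ F ∩ T, ‖(Dk k : ∀ _ : ℕ, ℂ) n‖ ^ α.toReal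
        ≤ ∑ n ∈ T, ‖(Dk k : ∀ _ : ℕ, ℂ) n‖ ^ α.toReal :=
      Finset.sum_le_sum_of_subset_of_nonneg Finset.inter_subset_right
        (fun _ _ _ => Real.rpow_nonneg (norm_nonneg _) _)
    have hstep3 : ∑ n ∈ T, ‖(Dk k : ∀ _ : ℕ, ℂ) n‖ ^ α.toReal
        = ∑ r ∈ Finset.range (N+1), ‖(Dk k : ∀ _ : ℕ, ℂ) (q d r - 1)‖ ^ α.toReal := by
      rw [hTdef]
      apply Finset.sum_image
      intro r hr r' hr' heq
      have h1 := q_pos hd0 hd r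
      have h2 := q_pos hd0 hd r'
      beta_reduce at heq
      exact (q_strictMono hd0 hd).injective (show q d r = q d r' by omega)
    have hstep4 : ∑ r ∈ Finset.range (N+1), ‖(Dk k : ∀ _ : ℕ, ℂ) (q d r - 1)‖ ^ α.toReal
        ≤ ∑ r ∈ Finset.range (N+1), ((if r = k then (M+1) ^ α.toReal else 0)
            + ((∏ j ∈ Finset.Icc 1 r, p j) - ∏ j ∈ Finset.Icc 1 (r+1), p j)) := by
      apply Finset.sum_le_sum
      intro r hr
      have hPRd : 0 ≤ (∏ j ∈ Finset.Icc 1 r, p j) - ∏ j ∈ Finset.Icc 1 (r+1), p j := by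
        have := hPRmono r; linarith
      rcases lt_trichotomy r k with hrk | hrk | hrk
      · -- r < k : defect vanishes
        have hlt : (q d r - 1) + 1 < q d k := by
          have h1 := q_pos hd0 hd r
          have h2 : q d r < q d k := q_strictMono hd0 hd hrk
          omega
        have hD0 : (Dk k : ∀ _ : ℕ, ℂ) (q d r - 1) = 0 := by
          rw [hDcoe, trunc_lt hd0 hd p lam hp hlt, sub_self]
        rw [hD0, if_neg (by omega)]
        simp only [norm_zero, Real.zero_rpow (ne_of_gt ht0), zero_add]
        exact hPRd
      · -- r = k : boundary term
        subst hrk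
        have hDb : (Dk r : ∀ _ : ℕ, ℂ) (q d r - 1)
            = -((∏ j ∈ Finset.Icc 1 (r+1), (p j : ℂ)) * iota d p lam (r+1)) := by
          rw [hDcoe]
          exact trunc_boundary hd0 hd p lam hp r
        rw [hDb, if_pos rfl, norm_neg]
        have h1 : ‖(∏ j ∈ Finset.Icc 1 (r+1), (p j : ℂ)) * iota d p lam (r+1)‖ ^ α.toReal
            ≤ (M+1) ^ α.toReal :=
          Real.rpow_le_rpow (norm_nonneg _) (hbv r) (le_of_lt ht0)
        linarith
      · -- r > k : small tail term
        have hge : q d k ≤ q d r - 1 := by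
          have h1 : q d k < q d r := q_strictMono hd0 hd hrk
          have h2 : q d (k+1) ≤ q d r := (q_strictMono hd0 hd).monotone (by omega)
          omega
        rcases trunc_upper hd0 hd p lam hp hge with h0 | ⟨r', hkr', hnr', hval⟩
        · rw [hDcoe, h0, if_neg (by omega)]
          simp only [norm_zero, Real.zero_rpow (ne_of_gt ht0), zero_add]
          exact hPRd
        · have hq1 := q_pos hd0 hd r
          have hq2 := q_pos hd0 hd r'
          have hrr' : r' = r := (q_strictMono hd0 hd).injective (show q d r' = q d r by omega)
          subst hrr'
          have hDval : ‖(Dk k : ∀ _ : ℕ, ℂ) (q d r' - 1)‖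
              = (∏ j ∈ Finset.Icc 1 r', p j) - ∏ j ∈ Finset.Icc 1 (r'+1), p j := by
            rw [hDcoe, hval, Complex.norm_real, Real.norm_eq_abs]
            rw [abs_of_nonneg (by
              have h3 := hPRpos r'
              have h4 := (hp (r'+1) (by omega)).2
              nlinarith)]
            rw [hPRsucc r']
            ring
          rw [hDval, if_neg (by omega), zero_add]
          set x := (∏ j ∈ Finset.Icc 1 r', p j) - ∏ j ∈ Finset.Icc 1 (r'+1), p j with hxdef
          have hx0 : 0 ≤ x := hPRd
          have hx1 : x ≤ 1 := by
            have h5 := hPRle1 r'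
            have h6 := hPRpos (r'+1)
            rw [hxdef]
            linarith
          rcases eq_or_lt_of_le hx0 with h7 | h7
          · rw [← h7, Real.zero_rpow (ne_of_gt ht0)]
          · calc x ^ α.toReal ≤ x ^ (1:ℝ) :=
                Real.rpow_le_rpow_of_exponent_ge h7 hx1 ht1
              _ = x := Real.rpow_one x
      done
    have hstep5 : ∑ r ∈ Finset.range (N+1), ((if r = k then (M+1) ^ α.toReal else 0)
            + ((∏ j ∈ Finset.Icc 1 r, p j) - ∏ j ∈ Finset.Icc 1 (r+1), p j))
        ≤ (M + 1) ^ α.toReal + 1 := by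
      rw [Finset.sum_add_distrib]
      have h1 : ∑ r ∈ Finset.range (N+1), (if r = k then (M+1) ^ α.toReal else 0)
          ≤ (M+1) ^ α.toReal := by
        rw [Finset.sum_ite_eq' (Finset.range (N+1)) k (fun _ => (M+1) ^ α.toReal)]
        split
        · exact le_refl _
        · positivity
      have h2 : ∑ r ∈ Finset.range (N+1),
            ((∏ j ∈ Finset.Icc 1 r, p j) - ∏ j ∈ Finset.Icc 1 (r+1), p j) ≤ 1 := by
        rw [Finset.sum_range_sub' (fun r => ∏ j ∈ Finset.Icc 1 r, p j)]
        have h3 : ∏ j ∈ Finset.Icc 1 0, p j = 1 := by simp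
        have h4 := hPRpos (N+1)
        rw [h3]
        linarith
      linarith
    calc ∑ n ∈ F, ‖(Dk k : ∀ _ : ℕ, ℂ) n‖ ^ α.toReal
        = ∑ n ∈ F ∩ T, ‖(Dk k : ∀ _ : ℕ, ℂ) n‖ ^ α.toReal := hstep1
      _ ≤ ∑ n ∈ T, ‖(Dk k : ∀ _ : ℕ, ℂ) n‖ ^ α.toReal := hstep2
      _ = ∑ r ∈ Finset.range (N+1), ‖(Dk k : ∀ _ : ℕ, ℂ) (q d r - 1)‖ ^ α.toReal := hstep3
      _ ≤ _ := le_trans hstep4 hstep5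
  have hDnorm : ∀ k, ‖Dk k‖ ≤ ((M + 1) ^ α.toReal + 1) ^ (α.toReal)⁻¹ := by
    intro k
    have h1 := hDbound k
    have h2 : (‖Dk k‖ ^ α.toReal) ^ (α.toReal)⁻¹ ≤ (((M + 1) ^ α.toReal + 1)) ^ (α.toReal)⁻¹ :=
      Real.rpow_le_rpow (by positivity) h1 (by positivity)
    rwa [Real.rpow_rpow_inv (norm_nonneg _) (ne_of_gt ht0)] at h2
  -- the approximate eigenvectors
  refine ⟨fun k => (((‖W k‖)⁻¹ : ℝ) : ℂ) • W k, ?_, ?_⟩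
  · intro k
    rw [norm_smul]
    have h1 : ‖((((‖W k‖)⁻¹ : ℝ)) : ℂ)‖ = (‖W k‖)⁻¹ := by
      rw [Complex.norm_real, Real.norm_eq_abs, abs_of_nonneg (inv_nonneg.mpr (norm_nonneg _))]
    rw [h1]
    exact inv_mul_cancel₀ (ne_of_gt (hWpos k))
  · have heq : ∀ k, Ta ((((‖W k‖)⁻¹ : ℝ) : ℂ) • W k) - lam • ((((‖W k‖)⁻¹ : ℝ) : ℂ) • W k)
        = (((‖W k‖)⁻¹ : ℝ) : ℂ) • Dk k := by
      intro k
      rw [hDkdef]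
      rw [map_smul, smul_comm lam, smul_sub]
    have hbound : ∀ k, ‖Ta ((((‖W k‖)⁻¹ : ℝ) : ℂ) • W k) - lam • ((((‖W k‖)⁻¹ : ℝ) : ℂ) • W k)‖
        ≤ ((M + 1) ^ α.toReal + 1) ^ (α.toReal)⁻¹ * (‖W k‖)⁻¹ := by
      intro k
      rw [heq k, norm_smul]
      have h1 : ‖((((‖W k‖)⁻¹ : ℝ)) : ℂ)‖ = (‖W k‖)⁻¹ := by
        rw [Complex.norm_real, Real.norm_eq_abs, abs_of_nonneg (inv_nonneg.mpr (norm_nonneg _))]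
      rw [h1]
      rw [mul_comm]
      apply mul_le_mul_of_nonneg_right (hDnorm k) (inv_nonneg.mpr (norm_nonneg _))
    have hlim : Filter.Tendsto
        (fun k => ((M + 1) ^ α.toReal + 1) ^ (α.toReal)⁻¹ * (‖W k‖)⁻¹)
        Filter.atTop (nhds 0) := by
      have h1 : Filter.Tendsto (fun k => (‖W k‖)⁻¹) Filter.atTop (nhds 0) :=
        hdiv.inv_tendsto_atTop
      have h2 := Filter.Tendsto.const_mul (((M + 1) ^ α.toReal + 1) ^ (α.toReal)⁻¹) h1
      simpa using h2
    exact squeeze_zero (fun k => norm_nonneg _) hbound hlim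


end AMFC
end
end

section
/- Suppose lim_{j→∞} p_j = 1 and p_i ≥ 2(√2 − 1) for all i ≥ 1. Then the fibered filled Julia set E is a connected subset of ℂ. -/
open Filter Finset
open scoped ENNReal Topology ZeroAtInfty

noncomputable section

namespace AMFC

/-! ### Auxiliary material for Statement 14 -/

lemma sqrt2_facts : (Real.sqrt 2) ^ 2 = 2 ∧ 1 ≤ Real.sqrt 2 ∧ Real.sqrt 2 ≤ 3/2 := by
  have h0 : (0:ℝ) ≤ 2 := by norm_num
  have h := Real.sq_sqrt h0
  have hn := Real.sqrt_nonneg 2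
  refine ⟨by rw [sq] at h; nlinarith, by nlinarith [h], by nlinarith [h]⟩

lemma real_invariant {p m : ℝ} (hpl : 2 * (Real.sqrt 2 - 1) ≤ p) (hpu : p ≤ 1)
    (hm0 : 0 ≤ m) (hmt : m ≤ 3 - 2 * Real.sqrt 2) {n : ℕ} (hn : 2 ≤ n) :
    ((m + (1 - p)) / p) ^ n ≤ 3 - 2 * Real.sqrt 2 := by
  obtain ⟨hs2, hs1, hs32⟩ := sqrt2_facts
  have hp0 : 0 < p := by nlinarith
  have hb0 : 0 ≤ (m + (1 - p)) / p := div_nonneg (by nlinarith) hp0.le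
  have hb1 : (m + (1 - p)) / p ≤ Real.sqrt 2 - 1 := by
    rw [div_le_iff₀ hp0]; nlinarith
  have hble : (m + (1 - p)) / p ≤ 1 := by nlinarith
  calc ((m + (1 - p)) / p) ^ n ≤ ((m + (1 - p)) / p) ^ 2 :=
        pow_le_pow_of_le_one hb0 hble hn
    _ ≤ (Real.sqrt 2 - 1) ^ 2 := by nlinarith
    _ = 3 - 2 * Real.sqrt 2 := by nlinarith

lemma real_escape {p m : ℝ} (hp0 : 0 < p) (hpu : p ≤ 1) (hm : 4 < m) {n : ℕ} (hn : 2 ≤ n) :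
    2 * m ≤ ((m - (1 - p)) / p) ^ n := by
  have hb1 : (1:ℝ) ≤ (m - (1 - p)) / p := by
    rw [le_div_iff₀ hp0]; nlinarith
  have hb : m - 1 ≤ (m - (1 - p)) / p := by
    rw [le_div_iff₀ hp0]; nlinarith
  calc 2 * m ≤ (m - 1) ^ 2 := by nlinarith
    _ ≤ ((m - (1 - p)) / p) ^ 2 := by nlinarith
    _ ≤ ((m - (1 - p)) / p) ^ n := pow_le_pow_right₀ hb1 hn

lemma f_norm (d : ℕ → ℕ) (p : ℕ → ℝ) (j : ℕ) (z : ℂ) (hp0 : 0 < p j) :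
    ‖f d p j z‖ = (‖z - (1 - (p j : ℂ))‖ / p j) ^ d j := by
  rw [f, norm_pow, norm_div, Complex.norm_real, Real.norm_eq_abs, abs_of_pos hp0]

lemma norm_one_sub (pj : ℝ) (h : pj ≤ 1) : ‖(1 - (pj : ℂ))‖ = 1 - pj := by
  have : (1 - (pj : ℂ)) = ((1 - pj : ℝ) : ℂ) := by push_cast; ring
  rw [this, Complex.norm_real, Real.norm_eq_abs, abs_of_nonneg (by linarith)]

lemma f_invariant (d : ℕ → ℕ) (p : ℕ → ℝ) (j : ℕ) (z : ℂ)
    (hp0 : 0 < p j) (hpu : p j ≤ 1) (hpl : 2 * (Real.sqrt 2 - 1) ≤ p j) (hdj : 2 ≤ d j)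
    (hz : ‖z‖ ≤ 3 - 2 * Real.sqrt 2) : ‖f d p j z‖ ≤ 3 - 2 * Real.sqrt 2 := by
  rw [f_norm d p j z hp0]
  have h1 : ‖z - (1 - (p j : ℂ))‖ ≤ ‖z‖ + (1 - p j) := by
    calc ‖z - (1 - (p j : ℂ))‖ ≤ ‖z‖ + ‖(1 - (p j : ℂ))‖ := norm_sub_le _ _
      _ = ‖z‖ + (1 - p j) := by rw [norm_one_sub _ hpu]
  calc (‖z - (1 - (p j : ℂ))‖ / p j) ^ d j ≤ ((‖z‖ + (1 - p j)) / p j) ^ d j := by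
        exact pow_le_pow_left₀ (by positivity) ((div_le_div_iff_of_pos_right hp0).mpr h1) _
    _ ≤ 3 - 2 * Real.sqrt 2 := real_invariant hpl hpu (norm_nonneg z) hz hdj

lemma f_escape (d : ℕ → ℕ) (p : ℕ → ℝ) (j : ℕ) (z : ℂ)
    (hp0 : 0 < p j) (hpu : p j ≤ 1) (hdj : 2 ≤ d j)
    (hz : 4 < ‖z‖) : 2 * ‖z‖ ≤ ‖f d p j z‖ := by
  rw [f_norm d p j z hp0]
  have h1 : ‖z‖ - (1 - p j) ≤ ‖z - (1 - (p j : ℂ))‖ := by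
    have := norm_sub_norm_le z (1 - (p j : ℂ))
    rw [norm_one_sub _ hpu] at this; linarith
  calc 2 * ‖z‖ ≤ ((‖z‖ - (1 - p j)) / p j) ^ d j := real_escape hp0 hpu hz hdj
    _ ≤ (‖z - (1 - (p j : ℂ))‖ / p j) ^ d j := by
        exact pow_le_pow_left₀ (div_nonneg (by nlinarith) hp0.le)
          ((div_le_div_iff_of_pos_right hp0).mpr h1) _

lemma f_continuous (d : ℕ → ℕ) (p : ℕ → ℝ) (j : ℕ) : Continuous (f d p j) := by
  unfold f
  exact ((continuous_id.sub continuous_const).div_const _).pow _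

lemma ftil_continuous (d : ℕ → ℕ) (p : ℕ → ℝ) (j : ℕ) : Continuous (ftil d p j) := by
  induction j with
  | zero => exact continuous_id
  | succ n ih => exact (f_continuous d p (n+1)).comp ih

lemma f_isOpenMap (d : ℕ → ℕ) (p : ℕ → ℝ) (j : ℕ) (hp0 : 0 < p j) (hdj : 2 ≤ d j) :
    IsOpenMap (f d p j) := by
  have hpne : (p j : ℂ) ≠ 0 := by exact_mod_cast hp0.ne'
  have han : AnalyticOnNhd ℂ (f d p j) Set.univ := by
    intro z _
    exact ((analyticAt_id.sub analyticAt_const).div analyticAt_const hpne).pow _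
  rcases han.is_constant_or_isOpen isPreconnected_univ with ⟨w, hw⟩ | h
  · exfalso
    have h1 : f d p j 1 = 1 := by
      rw [f]
      have : ((1:ℂ) - (1 - (p j : ℂ))) / (p j : ℂ) = 1 := by field_simp; ring
      rw [this, one_pow]
    have h0 : f d p j (1 - (p j : ℂ)) = 0 := by
      rw [f, sub_self, zero_div, zero_pow (by omega)]
    have e1 := hw 1 (Set.mem_univ _)
    have e0 := hw (1 - (p j : ℂ)) (Set.mem_univ _)
    rw [h1] at e1; rw [h0] at e0
    exact one_ne_zero (e1.trans e0.symm)
  · exact fun U hU => h U (Set.subset_univ U) hU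

lemma f_fiber_zero (d : ℕ → ℕ) (p : ℕ → ℝ) (j : ℕ) (hp0 : 0 < p j) {a : ℂ}
    (ha : f d p j a = 0) : a = 1 - (p j : ℂ) := by
  have hpne : (p j : ℂ) ≠ 0 := by exact_mod_cast hp0.ne'
  rw [f, pow_eq_zero_iff', div_eq_zero_iff] at ha
  rcases ha.1 with h | h
  · exact sub_eq_zero.mp h
  · exact absurd h hpne

/-- Key topological lemma: the preimage of a preconnected set under a continuous open map
with a unique preimage of some point of the set is preconnected, provided it is compact. -/
lemma preconn_preimage {g : ℂ → ℂ} (hc : Continuous g) (ho : IsOpenMap g) {S : Set ℂ}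
    (hS : IsPreconnected S) {z₀ : ℂ} (hz₀ : z₀ ∈ S)
    (hfib : ∀ a b, g a = z₀ → g b = z₀ → a = b)
    (hT : IsCompact (g ⁻¹' S)) : IsPreconnected (g ⁻¹' S) := by
  set T := g ⁻¹' S with hTdef
  have hTc : IsClosed T := hT.isClosed
  rw [isPreconnected_iff_subset_of_fully_disjoint_closed hTc]
  intro u v hu hv hTuv hdisj
  by_contra hcon
  push_neg at hcon
  obtain ⟨hnu, hnv⟩ := hcon
  have hAne : (T ∩ u).Nonempty := by
    obtain ⟨x, hxT, hxv⟩ := Set.not_subset.mp hnv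
    exact ⟨x, hxT, (hTuv hxT).resolve_right hxv⟩
  have hBne : (T ∩ v).Nonempty := by
    obtain ⟨x, hxT, hxu⟩ := Set.not_subset.mp hnu
    exact ⟨x, hxT, (hTuv hxT).resolve_left hxu⟩
  haveI : PreconnectedSpace S := Subtype.preconnectedSpace hS
  have claim : ∀ u' v' : Set ℂ, IsClosed u' → IsClosed v' → T ⊆ u' ∪ v' → Disjoint u' v' →
      (T ∩ u').Nonempty → ∃ a ∈ T ∩ u', g a = z₀ := by
    intro u' v' hu' hv' hTuv' hdisj' hAne'
    have hAcomp : IsCompact (T ∩ u') := hT.inter_right hu'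
    have key : S ∩ (g '' v'ᶜ) = g '' (T ∩ u') := by
      apply Set.Subset.antisymm
      · rintro s ⟨hsS, w, hwv, rfl⟩
        have hwT : w ∈ T := hsS
        exact ⟨w, ⟨hwT, (hTuv' hwT).resolve_right hwv⟩, rfl⟩
      · rintro s ⟨a, ⟨haT, hau⟩, rfl⟩
        exact ⟨haT, a, Set.disjoint_left.mp hdisj' hau, rfl⟩
    set t : Set S := Subtype.val ⁻¹' (g '' v'ᶜ) with htdef
    have ht_open : IsOpen t := (ho _ hv'.isOpen_compl).preimage continuous_subtype_val
    have ht_closed : IsClosed t := by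
      have : t = Subtype.val ⁻¹' (g '' (T ∩ u')) := by
        ext x
        simp only [htdef, Set.mem_preimage]
        constructor
        · intro hx
          have : (x : ℂ) ∈ S ∩ (g '' v'ᶜ) := ⟨x.2, hx⟩
          rw [key] at this; exact this
        · intro hx
          have : (x : ℂ) ∈ S ∩ (g '' v'ᶜ) := by rw [key]; exact hx
          exact this.2
      rw [this]
      exact ((hAcomp.image hc).isClosed).preimage continuous_subtype_val
    have ht_ne : t.Nonempty := by
      obtain ⟨a, haT, hau⟩ := hAne'
      refine ⟨⟨g a, haT⟩, ?_⟩
      exact ⟨a, Set.disjoint_left.mp hdisj' hau, rfl⟩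
    have huniv : t = Set.univ := ((isClopen_iff.mp ⟨ht_closed, ht_open⟩).resolve_left
      (Set.nonempty_iff_ne_empty.mp ht_ne))
    have hz₀t : (⟨z₀, hz₀⟩ : S) ∈ t := huniv ▸ Set.mem_univ _
    have : z₀ ∈ S ∩ (g '' v'ᶜ) := ⟨hz₀, hz₀t⟩
    rw [key] at this
    obtain ⟨a, haA, hag⟩ := this
    exact ⟨a, haA, hag⟩
  obtain ⟨a, haA, hga⟩ := claim u v hu hv hTuv hdisj hAne
  obtain ⟨b, hbB, hgb⟩ := claim v u hv hu (Set.union_comm u v ▸ hTuv) hdisj.symm hBne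
  have hab : a = b := hfib a b hga hgb
  exact (Set.disjoint_left.mp hdisj haA.2 (hab ▸ hbB.2))

/-- Nested intersection of compact preconnected sets is preconnected. -/
lemma preconn_iInter {K : ℕ → Set ℂ} (hcomp : ∀ n, IsCompact (K n))
    (hconn : ∀ n, IsPreconnected (K n)) (hanti : ∀ n, K (n + 1) ⊆ K n) :
    IsPreconnected (⋂ n, K n) := by
  set X := ⋂ n, K n with hXdef
  have hmono : Antitone K := antitone_nat_of_succ_le hanti
  have hXclosed : IsClosed X := isClosed_iInter fun n => (hcomp n).isClosed
  have hXsub : ∀ n, X ⊆ K n := fun n => Set.iInter_subset _ n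
  rw [isPreconnected_iff_subset_of_fully_disjoint_closed hXclosed]
  intro u v hu hv hXuv hdisj
  by_contra hcon
  push_neg at hcon
  obtain ⟨hnu, hnv⟩ := hcon
  have hAne : (X ∩ u).Nonempty := by
    obtain ⟨x, hxX, hxv⟩ := Set.not_subset.mp hnv
    exact ⟨x, hxX, (hXuv hxX).resolve_right hxv⟩
  have hBne : (X ∩ v).Nonempty := by
    obtain ⟨x, hxX, hxu⟩ := Set.not_subset.mp hnu
    exact ⟨x, hxX, (hXuv hxX).resolve_left hxu⟩
  have hXcomp : IsCompact X := (hcomp 0).of_isClosed_subset hXclosed (hXsub 0)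
  have hAcomp : IsCompact (X ∩ u) := hXcomp.inter_right hu
  have hBcomp : IsCompact (X ∩ v) := hXcomp.inter_right hv
  have hABdisj : Disjoint (X ∩ u) (X ∩ v) :=
    hdisj.mono (Set.inter_subset_right) (Set.inter_subset_right)
  obtain ⟨U, V, hUo, hVo, hAU, hBV, hUV⟩ :=
    SeparatedNhds.of_isCompact_isCompact hAcomp hBcomp hABdisj
  have hXUV : X ⊆ U ∪ V := by
    intro x hxX
    rcases hXuv hxX with h | h
    · exact Or.inl (hAU ⟨hxX, h⟩)
    · exact Or.inr (hBV ⟨hxX, h⟩)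
  have hKn : ∃ n, K n ⊆ U ∪ V := by
    by_contra hno
    push_neg at hno
    have hne : ∀ n, (K n \ (U ∪ V)).Nonempty := by
      intro n
      obtain ⟨x, hxK, hxUV⟩ := Set.not_subset.mp (hno n)
      exact ⟨x, hxK, hxUV⟩
    have hdir : Directed (· ⊇ ·) (fun n => K n \ (U ∪ V)) := by
      intro m n
      exact ⟨max m n, Set.diff_subset_diff_left (hmono (le_max_left m n)),
        Set.diff_subset_diff_left (hmono (le_max_right m n))⟩
    obtain ⟨x, hx⟩ := IsCompact.nonempty_iInter_of_directed_nonempty_isCompact_isClosed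
      (fun n => K n \ (U ∪ V)) hdir hne
      (fun n => (hcomp n).diff (hUo.union hVo))
      (fun n => (hcomp n).isClosed.sdiff (hUo.union hVo))
    have hxX : x ∈ X := by
      rw [hXdef, Set.mem_iInter]
      exact fun n => ((Set.mem_iInter.mp hx n).1)
    exact (Set.mem_iInter.mp hx 0).2 (hXUV hxX)
  obtain ⟨n, hKnUV⟩ := hKn
  obtain ⟨x, hx⟩ := (hconn n) U V hUo hVo hKnUV
    (hAne.mono fun a ha => ⟨hXsub n ha.1, hAU ha⟩)
    (hBne.mono fun b hb => ⟨hXsub n hb.1, hBV hb⟩)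
  exact Set.disjoint_left.mp hUV hx.2.1 hx.2.2

/-- The tower of preimages of the disk of radius `4`. -/
def St (d : ℕ → ℕ) (p : ℕ → ℝ) (j : ℕ) : ℕ → Set ℂ
  | 0 => Metric.closedBall 0 4
  | i + 1 => f d p (j - i) ⁻¹' St d p j i

/-- if `p_j → 1` and `p_i ≥ 2(√2 - 1)` for all `i ≥ 1`, then `E` is
a connected subset of `ℂ`. -/
theorem stmt14 (d : ℕ → ℕ) (p : ℕ → ℝ)
    (hd0 : d 0 = 1) (hd : ∀ j, 1 ≤ j → 2 ≤ d j)
    (hp : ∀ j, 1 ≤ j → p j ∈ Set.Ioc (0 : ℝ) 1)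
    (hp1 : Filter.Tendsto (fun j => p j) Filter.atTop (nhds (1 : ℝ)))
    (hrho : ∀ i, 1 ≤ i → 2 * (Real.sqrt 2 - 1) ≤ p i) :
    IsConnected (E d p) := by
  obtain ⟨hs2, hs1, hs32⟩ := sqrt2_facts
  have ht0 : 0 < 3 - 2 * Real.sqrt 2 := by nlinarith
  have ht4 : 3 - 2 * Real.sqrt 2 ≤ 4 := by nlinarith
  -- properties of the tower of preimages
  have hSt : ∀ j i, i ≤ j → (St d p j i ⊆ Metric.closedBall 0 4 ∧
      Metric.closedBall 0 (3 - 2 * Real.sqrt 2) ⊆ St d p j i ∧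
      IsCompact (St d p j i) ∧ IsPreconnected (St d p j i)) := by
    intro j i
    induction i with
    | zero =>
      intro _
      exact ⟨subset_rfl, Metric.closedBall_subset_closedBall ht4,
        isCompact_closedBall _ _, (convex_closedBall _ _).isPreconnected⟩
    | succ i ih =>
      intro hij
      have hi : i ≤ j := by omega
      obtain ⟨h4, hdt, hcpt, hcon⟩ := ih hi
      have hr1 : 1 ≤ j - i := by omega
      have hpr := hp _ hr1
      have hd2 := hd _ hr1
      have hrh := hrho _ hr1
      have hsub4 : St d p j (i + 1) ⊆ Metric.closedBall 0 4 := by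
        intro z hz
        rw [mem_closedBall_zero_iff]
        by_contra h
        push_neg at h
        have hesc := f_escape d p (j - i) z hpr.1 hpr.2 hd2 h
        have h4' : ‖f d p (j - i) z‖ ≤ 4 := mem_closedBall_zero_iff.mp (h4 hz)
        nlinarith
      have hsubt : Metric.closedBall (0:ℂ) (3 - 2 * Real.sqrt 2) ⊆ St d p j (i + 1) := by
        intro z hz
        show f d p (j - i) z ∈ St d p j i
        exact hdt (mem_closedBall_zero_iff.mpr
          (f_invariant d p (j - i) z hpr.1 hpr.2 hrh hd2 (mem_closedBall_zero_iff.mp hz)))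
      have hclosed : IsClosed (St d p j (i + 1)) :=
        hcpt.isClosed.preimage (f_continuous d p (j - i))
      have hcpt' : IsCompact (St d p j (i + 1)) :=
        (isCompact_closedBall (0:ℂ) 4).of_isClosed_subset hclosed hsub4
      have hz0 : (0:ℂ) ∈ St d p j i := hdt (mem_closedBall_zero_iff.mpr (by simpa using ht0.le))
      have hconn' : IsPreconnected (St d p j (i + 1)) := by
        refine preconn_preimage (f_continuous d p (j - i)) (f_isOpenMap d p (j - i) hpr.1 hd2)
          hcon hz0 ?_ hcpt'
        intro a b hga hgb
        rw [f_fiber_zero d p (j - i) hpr.1 hga, f_fiber_zero d p (j - i) hpr.1 hgb]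
      exact ⟨hsub4, hsubt, hcpt', hconn'⟩
  -- membership characterization
  have hStmem : ∀ j i, i ≤ j → ∀ z,
      (ftil d p (j - i) z ∈ St d p j i ↔ ‖ftil d p j z‖ ≤ 4) := by
    intro j i
    induction i with
    | zero => intro _ z; simp [St, mem_closedBall_zero_iff]
    | succ i ih =>
      intro hij z
      have hi : i ≤ j := by omega
      have hstep : j - i = (j - (i + 1)) + 1 := by omega
      have h1 : (ftil d p (j - (i + 1)) z ∈ St d p j (i + 1)) ↔
          f d p (j - i) (ftil d p (j - (i + 1)) z) ∈ St d p j i := Iff.rfl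
      rw [h1]
      have hcomp : f d p (j - i) (ftil d p (j - (i + 1)) z) = ftil d p (j - i) z := by
        rw [hstep]; rfl
      rw [hcomp]
      exact ih hi z
  have hKchar : ∀ j z, (z ∈ St d p j j ↔ ‖ftil d p j z‖ ≤ 4) := by
    intro j z
    have := hStmem j j le_rfl z
    simpa [Nat.sub_self, ftil] using this
  have hzeroK : ∀ j, (0:ℂ) ∈ St d p j j :=
    fun j => (hSt j j le_rfl).2.1 (mem_closedBall_zero_iff.mpr (by simpa using ht0.le))
  -- E is the nested intersection
  have hE : E d p = ⋂ j, St d p j j := by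
    ext z
    simp only [Set.mem_iInter]
    constructor
    · intro hz j
      rw [hKchar]
      by_contra h
      push_neg at h
      have grow : ∀ k, 4 < ‖ftil d p (j + k) z‖ ∧ (2:ℝ) ^ k * 4 ≤ ‖ftil d p (j + k) z‖ := by
        intro k
        induction k with
        | zero => exact ⟨h, by simpa using h.le⟩
        | succ k ihk =>
          obtain ⟨h4k, hgk⟩ := ihk
          have hr1 : 1 ≤ j + k + 1 := by omega
          have hpr := hp _ hr1
          have hesc := f_escape d p (j + k + 1) (ftil d p (j + k) z) hpr.1 hpr.2 (hd _ hr1) h4k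
          have heq : ftil d p (j + (k + 1)) z = f d p (j + k + 1) (ftil d p (j + k) z) := rfl
          rw [heq]
          constructor
          · nlinarith
          · calc (2:ℝ) ^ (k + 1) * 4 = 2 * ((2:ℝ) ^ k * 4) := by ring
              _ ≤ 2 * ‖ftil d p (j + k) z‖ := by nlinarith
              _ ≤ _ := hesc
      have htop : Tendsto (fun m => (‖ftil d p m z‖₊ : ℝ≥0∞)) atTop (nhds ⊤) := by
        rw [ENNReal.tendsto_nhds_top_iff_nnreal]
        intro r
        obtain ⟨k, hk⟩ := pow_unbounded_of_one_lt (r : ℝ) one_lt_two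
        rw [eventually_atTop]
        refine ⟨j + k, fun m hm => ?_⟩
        have hm' : j + (m - j) = m := by omega
        have hge := (grow (m - j)).2
        rw [hm'] at hge
        have h2 : (2:ℝ) ^ k ≤ (2:ℝ) ^ (m - j) * 4 := by
          have hle : (2:ℝ) ^ k ≤ (2:ℝ) ^ (m - j) := pow_le_pow_right₀ one_le_two (by omega)
          nlinarith [pow_pos (zero_lt_two (α := ℝ)) (m - j)]
        have hfin : (r : ℝ) < ‖ftil d p m z‖ := lt_of_lt_of_le hk (le_trans h2 hge)
        exact_mod_cast hfin
      rw [E, Set.mem_setOf_eq, htop.limsup_eq] at hz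
      exact lt_irrefl _ hz
    · intro hz
      rw [E, Set.mem_setOf_eq]
      have hb : ∀ᶠ m in atTop, (‖ftil d p m z‖₊ : ℝ≥0∞) ≤ (4 : ℝ≥0∞) := by
        refine Eventually.of_forall fun m => ?_
        have h4 := (hKchar m z).mp (hz m)
        exact_mod_cast h4
      exact lt_of_le_of_lt (Filter.limsup_le_of_le (by isBoundedDefault) hb)
        (by norm_num)
  rw [hE]
  constructor
  · exact ⟨0, Set.mem_iInter.mpr hzeroK⟩
  · refine preconn_iInter (fun j => (hSt j j le_rfl).2.2.1) (fun j => (hSt j j le_rfl).2.2.2) ?_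
    intro j z hz
    rw [hKchar] at hz ⊢
    by_contra h
    push_neg at h
    have hr1 : 1 ≤ j + 1 := by omega
    have hpr := hp _ hr1
    have hesc := f_escape d p (j + 1) (ftil d p j z) hpr.1 hpr.2 (hd _ hr1) h
    have heq : ftil d p (j + 1) z = f d p (j + 1) (ftil d p j z) := rfl
    rw [heq] at hz
    nlinarith

end AMFC
end
end
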